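/- arXiv:1605.09575 — 5 statements merged into one kernel-verified Lean document; each statement's English description precedes it below -/
import Mathlib

section
/- Let λ be a special type C partition of 2n. Row procedure: pad the list of parts of λ with one zero at the end if necessary so that its length is odd; delete all odd entries; then repeatedly delete two equal adjacent entries occupying positions 2t+1 and 2t for some t ≥ 0, until no such pair remains; let the number of remaining entries be 2q_r+1. Column procedure: take the padded column list of λ (padded with zeros to odd length); repeatedly delete two equal adjacent entries at positions 2t+1 and 2t until no such pair remains; then repeatedly delete two equal adjacent entries of odd value at positions 2t and 2t−1 until no such pair remains; let the number of remaining entries be 2q_c+1. Then both counts are independent of the choices of deletions, and q_r = q_c. (This common value q is the rank of the Lusztig quotient Ā(O) ≅ (ℤ/2ℤ)^q of the corresponding special orbit O of Sp(2n,ℂ); the statement is the agreement of the row description and the column description of Ā(O).) -/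
/-- `l` is a partition of `N`: a weakly decreasing list of positive integers with sum `N`. -/
def IsPartitionOf (N : ℕ) (l : List ℕ) : Prop :=
  l.Pairwise (· ≥ ·) ∧ (∀ x ∈ l, 0 < x) ∧ l.sum = N

/-- the `j`-th column length `c_j(λ) = #{i : λ_i ≥ j}`. -/
def colLen (l : List ℕ) (j : ℕ) : ℕ := l.countP (fun x => decide (j ≤ x))

/-- the transpose partition, as the list `c_1 ≥ c_2 ≥ ⋯ ≥ c_{λ_1}` of column lengths. -/
def transposeList (l : List ℕ) : List ℕ :=
  (List.range (l.foldr max 0)).map (fun j => colLen l (j + 1))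

/-- pad a list with one zero at the end if necessary so that its length is odd. -/
def padToOdd (c : List ℕ) : List ℕ := if Odd c.length then c else c ++ [0]

/-- Delete two equal adjacent entries occupying positions `2t+1` and `2t` for some `t ≥ 0`
(positions in a list of length `m` are numbered `m-1, …, 1, 0` from first to last). -/
def delStepE (L L' : List ℕ) : Prop :=
  ∃ (a : ℕ) (l₁ l₂ : List ℕ), Even l₂.length ∧ L = l₁ ++ a :: a :: l₂ ∧ L' = l₁ ++ l₂

/-- Delete two equal adjacent entries of odd value at positions `2t` and `2t-1`, `t ≥ 1`. -/
def delStepOOddVal (L L' : List ℕ) : Prop :=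
  ∃ (a : ℕ) (l₁ l₂ : List ℕ),
    Odd a ∧ Odd l₂.length ∧ L = l₁ ++ a :: a :: l₂ ∧ L' = l₁ ++ l₂

namespace TypeCAux
open List

def nfR : List ℕ → List ℕ
  | a :: b :: t => if a = b then nfR t else a :: b :: nfR t
  | t => t

def nfO2 : List ℕ → List ℕ
  | a :: b :: t => if a = b ∧ Odd a then nfO2 t else a :: b :: nfO2 t
  | t => t

def nfO : List ℕ → List ℕ
  | [] => []
  | x :: t => x :: nfO2 t

@[elab_as_elim]
def twoStepRec {P : List ℕ → Sort*} (h0 : P []) (h1 : ∀ x, P [x])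
    (h2 : ∀ a b t, P t → P (a :: b :: t)) : ∀ r, P r
  | [] => h0
  | [x] => h1 x
  | a :: b :: t => h2 a b t (twoStepRec h0 h1 h2 t)

@[simp] theorem nfR_nil : nfR [] = [] := rfl
@[simp] theorem nfR_single (x : ℕ) : nfR [x] = [x] := rfl
theorem nfR_cons₂ (a b : ℕ) (t : List ℕ) :
    nfR (a :: b :: t) = if a = b then nfR t else a :: b :: nfR t := rfl
@[simp] theorem nfO2_nil : nfO2 [] = [] := rfl
@[simp] theorem nfO2_single (x : ℕ) : nfO2 [x] = [x] := rfl
theorem nfO2_cons₂ (a b : ℕ) (t : List ℕ) :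
    nfO2 (a :: b :: t) = if a = b ∧ Odd a then nfO2 t else a :: b :: nfO2 t := rfl

theorem nfR_pre (a : ℕ) (w : List ℕ) : ∀ (u : List ℕ), Even u.length →
    nfR (u ++ a :: a :: w) = nfR (u ++ w) := by
  intro u
  induction u using twoStepRec with
  | h0 => intro _; simp [nfR_cons₂]
  | h1 x => intro h; simp at h
  | h2 x y u ih =>
    intro h
    simp only [length_cons] at h
    have : Even u.length := by
      rcases h with ⟨k, hk⟩; exact ⟨k - 1, by omega⟩
    by_cases hxy : x = y <;> simp [nfR_cons₂, hxy, ih this]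

theorem nfO2_pre (a : ℕ) (ha : Odd a) (w : List ℕ) : ∀ (u : List ℕ), Even u.length →
    nfO2 (u ++ a :: a :: w) = nfO2 (u ++ w) := by
  intro u
  induction u using twoStepRec with
  | h0 => intro _; simp [nfO2_cons₂, ha]
  | h1 x => intro h; simp at h
  | h2 x y u ih =>
    intro h
    simp only [length_cons] at h
    have : Even u.length := by
      rcases h with ⟨k, hk⟩; exact ⟨k - 1, by omega⟩
    by_cases hxy : x = y ∧ Odd x <;> simp [nfO2_cons₂, hxy, ih this]

theorem nfR_step {L L' : List ℕ} (h : delStepE L L') : nfR L.reverse = nfR L'.reverse := by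
  obtain ⟨a, l₁, l₂, hev, rfl, rfl⟩ := h
  have h1 : (l₁ ++ a :: a :: l₂).reverse = l₂.reverse ++ a :: a :: l₁.reverse := by
    simp
  have h2 : (l₁ ++ l₂).reverse = l₂.reverse ++ l₁.reverse := by simp
  rw [h1, h2, nfR_pre a _ _ (by simpa using hev)]

theorem nfO_step {L L' : List ℕ} (h : delStepOOddVal L L') : nfO L.reverse = nfO L'.reverse := by
  obtain ⟨a, l₁, l₂, hodd, hol, rfl, rfl⟩ := h
  obtain ⟨u, x, rfl⟩ : ∃ u x, l₂ = u ++ [x] := by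
    rcases List.eq_nil_or_concat l₂ with h | ⟨u, x, rfl⟩
    · subst h; simp at hol
    · exact ⟨u, x, by simp⟩
  have hu : Even u.reverse.length := by
    simp only [List.length_append, List.length_reverse, List.length_cons,
      List.length_nil] at hol ⊢
    rcases hol with ⟨k, hk⟩
    exact ⟨k, by omega⟩
  have h1 : (l₁ ++ a :: a :: (u ++ [x])).reverse = x :: (u.reverse ++ a :: a :: l₁.reverse) := by
    simp
  have h2 : (l₁ ++ (u ++ [x])).reverse = x :: (u.reverse ++ l₁.reverse) := by simp
  rw [h1, h2]
  show x :: nfO2 _ = x :: nfO2 _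
  rw [nfO2_pre a hodd _ _ hu]

theorem nfR_not_fix : ∀ {r : List ℕ}, nfR r ≠ r →
    ∃ a u w, Even u.length ∧ r = u ++ a :: a :: w := by
  intro r
  induction r using twoStepRec with
  | h0 => intro h; simp at h
  | h1 x => intro h; simp at h
  | h2 a b t ih =>
    intro h
    by_cases hab : a = b
    · exact ⟨a, [], t, by simp, by simp [hab]⟩
    · rw [nfR_cons₂, if_neg hab] at h
      have ht : nfR t ≠ t := fun he => h (by rw [he])
      obtain ⟨c, u, w, hu, rfl⟩ := ih ht
      refine ⟨c, a :: b :: u, w, ?_, by simp⟩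
      obtain ⟨k, hk⟩ := hu
      exact ⟨k + 1, by simp [List.length_cons]; omega⟩

theorem nfO2_not_fix : ∀ {r : List ℕ}, nfO2 r ≠ r →
    ∃ a u w, Odd a ∧ Even u.length ∧ r = u ++ a :: a :: w := by
  intro r
  induction r using twoStepRec with
  | h0 => intro h; simp at h
  | h1 x => intro h; simp at h
  | h2 a b t ih =>
    intro h
    by_cases hab : a = b ∧ Odd a
    · exact ⟨a, [], t, hab.2, by simp, by simp [hab.1]⟩
    · rw [nfO2_cons₂, if_neg hab] at h
      have ht : nfO2 t ≠ t := fun he => h (by rw [he])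
      obtain ⟨c, u, w, hc, hu, rfl⟩ := ih ht
      refine ⟨c, a :: b :: u, w, hc, ?_, by simp⟩
      obtain ⟨k, hk⟩ := hu
      exact ⟨k + 1, by simp [List.length_cons]; omega⟩

theorem terminal_E {M : List ℕ} (h : ∀ M', ¬ delStepE M M') : nfR M.reverse = M.reverse := by
  by_contra hne
  obtain ⟨a, u, w, hu, hrev⟩ := nfR_not_fix hne
  have hM : M = w.reverse ++ a :: a :: u.reverse := by
    have := congrArg List.reverse hrev
    simpa using this
  exact h (w.reverse ++ u.reverse) ⟨a, w.reverse, u.reverse, by simpa using hu, hM, rfl⟩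

theorem terminal_O {M : List ℕ} (h : ∀ M', ¬ delStepOOddVal M M') : nfO M.reverse = M.reverse := by
  by_contra hne
  obtain ⟨x, t, hMr⟩ : ∃ x t, M.reverse = x :: t := by
    rcases hM : M.reverse with _ | ⟨x, t⟩
    · exfalso; apply hne; rw [hM]; rfl
    · exact ⟨x, t, rfl⟩
  rw [hMr] at hne
  have ht : nfO2 t ≠ t := by
    intro he; apply hne; show x :: nfO2 t = x :: t; rw [he]
  obtain ⟨a, u, w, ha, hu, rfl⟩ := nfO2_not_fix ht
  have hM : M = w.reverse ++ a :: a :: (x :: u).reverse := by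
    have := congrArg List.reverse hMr
    simp only [List.reverse_reverse] at this
    rw [this]; simp
  refine h (w.reverse ++ (x :: u).reverse) ⟨a, w.reverse, (x :: u).reverse, ha, ?_, hM, rfl⟩
  obtain ⟨k, hk⟩ := hu
  exact ⟨k, by simp [List.length_cons]; omega⟩

theorem chain_E {L M : List ℕ} (h : Relation.ReflTransGen delStepE L M) :
    nfR M.reverse = nfR L.reverse := by
  induction h with
  | refl => rfl
  | tail _ hstep ih => rw [← nfR_step hstep]; exact ih

theorem chain_O {L M : List ℕ} (h : Relation.ReflTransGen delStepOOddVal L M) :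
    nfO M.reverse = nfO L.reverse := by
  induction h with
  | refl => rfl
  | tail _ hstep ih => rw [← nfO_step hstep]; exact ih

theorem nfR_sublist : ∀ (r : List ℕ), nfR r <+ r := by
  intro r
  induction r using twoStepRec with
  | h0 => simp
  | h1 x => simp
  | h2 a b t ih =>
    rw [nfR_cons₂]
    by_cases hab : a = b
    · simp only [if_pos hab]
      exact ih.trans ((List.sublist_cons_self b t).trans (List.sublist_cons_self a _))
    · simp only [if_neg hab]
      exact (ih.cons₂ b).cons₂ a

theorem nfR_length_parity : ∀ (r : List ℕ), (nfR r).length % 2 = r.length % 2 := by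
  intro r
  induction r using twoStepRec with
  | h0 => simp
  | h1 x => simp
  | h2 a b t ih =>
    rw [nfR_cons₂]
    by_cases hab : a = b <;> simp [hab, ih] <;> omega

/-! ### Statistics on sorted lists -/

/-- countP of `≤ v` splits as countP of `< v` plus count of `v`. -/
theorem countP_le_split (v : ℕ) : ∀ (t : List ℕ),
    t.countP (fun x => decide (x ≤ v)) = t.countP (fun x => decide (x < v)) + t.count v := by
  intro t
  induction t with
  | nil => simp
  | cons a t ih =>
    rw [List.countP_cons, List.countP_cons, List.count_cons, ih]
    rcases lt_trichotomy a v with h | h | h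
    · simp [Nat.le_of_lt h, h, Nat.ne_of_lt h]
      omega
    · subst h; simp; omega
    · simp [Nat.not_le.mpr h, Nat.lt_asymm h, (Nat.ne_of_lt h).symm]

/-- the stage-one statistic: number of distinct values with an odd number of
strictly smaller elements. -/
def stE (r : List ℕ) : ℕ :=
  (r.toFinset.filter (fun v => Odd (r.countP (fun x => decide (x < v))))).card

theorem sorted_min {a : ℕ} {t : List ℕ} (hs : List.Pairwise (· ≤ ·) (a :: t)) :
    (a :: t).countP (fun x => decide (x < a)) = 0 := by
  rw [List.countP_eq_zero]
  intro x hx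
  simp only [decide_eq_true_eq]
  rcases List.mem_cons.mp hx with rfl | hx
  · omega
  · exact Nat.not_lt.mpr ((List.pairwise_cons.mp hs).1 x hx)

theorem G1 : ∀ (r : List ℕ), List.Pairwise (· ≤ ·) r →
    (nfR r).length = 2 * stE r + r.length % 2 := by
  intro r
  induction r using twoStepRec with
  | h0 => intro _; simp [stE]
  | h1 x =>
    intro _
    have : stE [x] = 0 := by
      rw [stE, Finset.card_eq_zero, Finset.filter_eq_empty_iff]
      intro v hv
      simp only [List.toFinset_cons, List.toFinset_nil, Finset.mem_insert,
        Finset.notMem_empty, or_false] at hv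
      subst hv
      simp [List.countP_cons]
    simp [this]
  | h2 a b t ih =>
    intro hs
    have hab : a ≤ b := (List.pairwise_cons.mp hs).1 b (by simp)
    have hst : List.Pairwise (· ≤ ·) (b :: t) := (List.pairwise_cons.mp hs).2
    have ht : List.Pairwise (· ≤ ·) t := (List.pairwise_cons.mp hst).2
    have hbt : ∀ x ∈ t, b ≤ x := (List.pairwise_cons.mp hst).1
    have hat : ∀ x ∈ a :: b :: t, a ≤ x := by
      intro x hx
      rcases List.mem_cons.mp hx with rfl | hx
      · exact le_refl x
      · exact (List.pairwise_cons.mp hs).1 x hx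
    have hcp : ∀ v, (a :: b :: t).countP (fun x => decide (x < v)) =
        ((if a < v then 1 else 0) + (if b < v then 1 else 0)) +
          t.countP (fun x => decide (x < v)) := by
      intro v
      rw [List.countP_cons, List.countP_cons]
      by_cases h1 : a < v <;> by_cases h2 : b < v <;> simp [h1, h2] <;> omega
    have hcpa : (a :: b :: t).countP (fun x => decide (x < a)) = 0 := sorted_min hs
    by_cases h : a = b
    · -- equal case: stE unchanged
      subst h
      have hstE : stE (a :: a :: t) = stE t := by
        unfold stE
        congr 1
        apply Finset.ext
        intro v
        simp only [Finset.mem_filter, List.mem_toFinset, List.toFinset_cons,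
          Finset.mem_insert, List.mem_toFinset]
        constructor
        · rintro ⟨hv, hodd⟩
          rcases hv with rfl | rfl | hv
          · exfalso; rw [hcpa] at hodd; simp at hodd
          · exfalso; rw [hcpa] at hodd; simp at hodd
          · refine ⟨hv, ?_⟩
            rw [hcp v] at hodd
            rw [Nat.odd_iff] at hodd ⊢
            by_cases hav : a < v <;> simp [hav] at hodd <;> omega
        · rintro ⟨hv, hodd⟩
          refine ⟨Or.inr (Or.inr hv), ?_⟩
          rw [hcp v, Nat.odd_iff]
          rw [Nat.odd_iff] at hodd
          by_cases hav : a < v <;> simp [hav] <;> omega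
      rw [nfR_cons₂, if_pos rfl, ih ht, hstE]
      simp only [List.length_cons]
      omega
    · -- unequal case: stE grows by one
      have hab' : a < b := Nat.lt_of_le_of_ne hab h
      have hcptb : t.countP (fun x => decide (x < b)) = 0 := by
        rw [List.countP_eq_zero]
        intro x hx
        simp only [decide_eq_true_eq]
        exact Nat.not_lt.mpr (hbt x hx)
      have hstE : stE (a :: b :: t) = stE t + 1 := by
        unfold stE
        have hset : (a :: b :: t).toFinset.filter
            (fun v => Odd ((a :: b :: t).countP (fun x => decide (x < v)))) =
            insert b (t.toFinset.filter
              (fun v => Odd (t.countP (fun x => decide (x < v))))) := by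
          apply Finset.ext
          intro v
          simp only [Finset.mem_filter, Finset.mem_insert, List.mem_toFinset,
            List.toFinset_cons, Finset.mem_insert, List.mem_toFinset]
          constructor
          · rintro ⟨hv, hodd⟩
            by_cases hvb : v = b
            · exact Or.inl hvb
            · right
              rcases hv with rfl | rfl | hv
              · exfalso; rw [hcpa] at hodd; simp at hodd
              · exact absurd rfl hvb
              · refine ⟨hv, ?_⟩
                have hbv : b < v := Nat.lt_of_le_of_ne (hbt v hv) (Ne.symm hvb)
                rw [hcp v, if_pos (hab'.trans hbv), if_pos hbv] at hodd
                rw [Nat.odd_iff] at hodd ⊢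
                omega
          · rintro (rfl | ⟨hv, hodd⟩)
            · refine ⟨Or.inr (Or.inl rfl), ?_⟩
              rw [hcp v, if_pos hab', if_neg (Nat.lt_irrefl v), hcptb]
              decide
            · refine ⟨Or.inr (Or.inr hv), ?_⟩
              have hvb : v ≠ b := by
                rintro rfl
                rw [hcptb] at hodd; simp at hodd
              have hbv : b < v := Nat.lt_of_le_of_ne (hbt v hv) (Ne.symm hvb)
              rw [hcp v, if_pos (hab'.trans hbv), if_pos hbv, Nat.odd_iff]
              rw [Nat.odd_iff] at hodd
              omega
        rw [hset, Finset.card_insert_of_notMem, Nat.add_comm]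
        intro hmem
        rw [Finset.mem_filter] at hmem
        rw [hcptb] at hmem
        simp at hmem
      rw [nfR_cons₂, if_neg h]
      simp only [List.length_cons, ih ht, hstE]
      have : (t.length + 1 + 1) % 2 = t.length % 2 := by omega
      rw [this]
      ring

/-- alternating strictness predicate: entries at positions 2i, 2i+1 are strictly increasing. -/
def AS : List ℕ → Prop
  | a :: b :: t => a < b ∧ AS t
  | [] => True
  | [_] => True

@[simp] theorem AS_nil : AS [] := trivial
@[simp] theorem AS_single (x : ℕ) : AS [x] := trivial
theorem AS_cons₂ (a b : ℕ) (t : List ℕ) : AS (a :: b :: t) ↔ a < b ∧ AS t := Iff.rfl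

theorem nfR_AS : ∀ (r : List ℕ), List.Pairwise (· ≤ ·) r → AS (nfR r) := by
  intro r
  induction r using twoStepRec with
  | h0 => intro _; simp
  | h1 x => intro _; simp
  | h2 a b t ih =>
    intro hs
    have hab : a ≤ b := (List.pairwise_cons.mp hs).1 b (by simp)
    have ht : List.Pairwise (· ≤ ·) t := (List.pairwise_cons.mp (List.pairwise_cons.mp hs).2).2
    rw [nfR_cons₂]
    by_cases h : a = b
    · rw [if_pos h]; exact ih ht
    · rw [if_neg h, AS_cons₂]
      exact ⟨Nat.lt_of_le_of_ne hab h, ih ht⟩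

theorem nfR_sorted {r : List ℕ} (hs : List.Pairwise (· ≤ ·) r) :
    List.Pairwise (· ≤ ·) (nfR r) := hs.sublist (nfR_sublist r)

/-- count of each value in the stage-one normal form of a sorted list. -/
theorem K : ∀ (r : List ℕ), List.Pairwise (· ≤ ·) r → ∀ v ∈ r,
    (nfR r).count v =
      (if Odd (r.countP (fun x => decide (x < v))) then 1 else 0) +
      (if Odd (r.countP (fun x => decide (x ≤ v))) then 1 else 0) := by
  intro r
  induction r using twoStepRec with
  | h0 => intro _ v hv; simp at hv
  | h1 x =>
    intro _ v hv
    simp only [List.mem_singleton] at hv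
    subst hv
    simp [List.countP_cons, List.count_cons]
  | h2 a b t ih =>
    intro hs v hv
    have hab : a ≤ b := (List.pairwise_cons.mp hs).1 b (by simp)
    have hst : List.Pairwise (· ≤ ·) (b :: t) := (List.pairwise_cons.mp hs).2
    have ht : List.Pairwise (· ≤ ·) t := (List.pairwise_cons.mp hst).2
    have hbt : ∀ x ∈ t, b ≤ x := (List.pairwise_cons.mp hst).1
    -- countP decompositions
    have hcp : ∀ (p : ℕ → Bool), (a :: b :: t).countP p =
        ((if p a then 1 else 0) + (if p b then 1 else 0)) + t.countP p := by
      intro p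
      rw [List.countP_cons, List.countP_cons]
      by_cases h1 : p a <;> by_cases h2 : p b <;> simp [h1, h2] <;> omega
    by_cases h : a = b
    · -- deleted pair
      subst h
      rw [nfR_cons₂, if_pos rfl]
      by_cases hva : v = a
      -- v = a
      · subst hva
        have hlt : (v :: v :: t).countP (fun x => decide (x < v)) = 0 := sorted_min hs
        rw [hlt]
        by_cases hmem : v ∈ t
        · rw [ih ht v hmem]
          have h1 : t.countP (fun x => decide (x < v)) = 0 := by
            rw [List.countP_eq_zero]
            intro x hx
            simp only [decide_eq_true_eq]
            exact Nat.not_lt.mpr (hbt x hx)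
          rw [h1]
          have h2 : (v :: v :: t).countP (fun x => decide (x ≤ v)) =
              2 + t.countP (fun x => decide (x ≤ v)) := by
            rw [hcp]; simp
          rw [h2]
          have p2 : Odd (2 + t.countP (fun x => decide (x ≤ v))) ↔
              Odd (t.countP (fun x => decide (x ≤ v))) := by
            rw [Nat.odd_iff, Nat.odd_iff]; omega
          simp [p2]
        · have h0 : (nfR t).count v = 0 := by
            rw [← Nat.le_zero, ← List.count_eq_zero_of_not_mem hmem]
            exact (nfR_sublist t).count_le v
          rw [h0]
          have h1 : t.count v = 0 := List.count_eq_zero_of_not_mem hmem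
          have h2b : t.countP (fun x => decide (x < v)) = 0 := by
            rw [List.countP_eq_zero]
            intro x hx
            simp only [decide_eq_true_eq]
            exact Nat.not_lt.mpr (hbt x hx)
          have h2 : t.countP (fun x => decide (x ≤ v)) = 0 := by
            rw [countP_le_split, h1, h2b]
          have h3 : (v :: v :: t).countP (fun x => decide (x ≤ v)) = 2 := by
            rw [hcp, h2]; simp
          rw [h3]
          have h4 : ¬ Odd 2 := by decide
          simp [h4]
      -- v ∈ t
      · have hvt : v ∈ t := by
          rcases List.mem_cons.mp hv with rfl | hv'
          · exact absurd rfl hva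
          rcases List.mem_cons.mp hv' with rfl | hvt
          · exact absurd rfl hva
          · exact hvt
        have hav : a ≤ v := hab.trans (hbt v hvt)
        rw [ih ht v hvt]
        have e1 : (a :: a :: t).countP (fun x => decide (x < v)) =
            (if a < v then 2 else 0) + t.countP (fun x => decide (x < v)) := by
          rw [hcp]; by_cases h1 : a < v <;> simp [h1]
        have e2 : (a :: a :: t).countP (fun x => decide (x ≤ v)) =
            2 + t.countP (fun x => decide (x ≤ v)) := by
          rw [hcp]; simp [hav]
        have p1 : Odd ((if a < v then 2 else 0) + t.countP (fun x => decide (x < v))) ↔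
            Odd (t.countP (fun x => decide (x < v))) := by
          by_cases h1 : a < v <;> simp [h1, Nat.odd_iff] <;> omega
        have p2 : Odd (2 + t.countP (fun x => decide (x ≤ v))) ↔
            Odd (t.countP (fun x => decide (x ≤ v))) := by
          rw [Nat.odd_iff, Nat.odd_iff]; omega
        rw [e1, e2]
        simp [p1, p2]
    · -- kept pair
      have hab' : a < b := Nat.lt_of_le_of_ne hab h
      rw [nfR_cons₂, if_neg h]
      have hanott : a ∉ t := fun hmem => Nat.lt_irrefl a (Nat.lt_of_lt_of_le hab' (hbt a hmem))
      by_cases hva : v = a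
      · subst hva
        have hlt : (v :: b :: t).countP (fun x => decide (x < v)) = 0 := sorted_min hs
        have hle : (v :: b :: t).countP (fun x => decide (x ≤ v)) = 1 := by
          rw [hcp]
          have h1 : t.countP (fun x => decide (x ≤ v)) = 0 := by
            rw [List.countP_eq_zero]
            intro x hx
            simp only [decide_eq_true_eq]
            exact Nat.not_le.mpr (Nat.lt_of_lt_of_le hab' (hbt x hx))
          simp [Nat.not_le.mpr hab', h1]
        rw [hlt, hle]
        have hcount : (nfR t).count v = 0 := by
          rw [← Nat.le_zero, ← List.count_eq_zero_of_not_mem hanott]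
          exact (nfR_sublist t).count_le v
        rw [if_neg (by decide), if_pos (by decide)]
        simp [List.count_cons, Ne.symm (Nat.ne_of_lt hab'), hcount]
      · by_cases hvb : v = b
        · subst hvb
          have hlt : (a :: v :: t).countP (fun x => decide (x < v)) = 1 := by
            rw [hcp]
            have h1 : t.countP (fun x => decide (x < v)) = 0 := by
              rw [List.countP_eq_zero]
              intro x hx
              simp only [decide_eq_true_eq]
              exact Nat.not_lt.mpr (hbt x hx)
            simp [hab', h1]
          have hle : (a :: v :: t).countP (fun x => decide (x ≤ v)) =
              2 + t.countP (fun x => decide (x ≤ v)) := by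
            rw [hcp]; simp [Nat.le_of_lt hab']
          rw [hlt, hle]
          have hcnt : (nfR t).count v = if Odd (t.countP (fun x => decide (x ≤ v))) then 1 else 0 := by
            by_cases hmem : v ∈ t
            · rw [ih ht v hmem]
              have h1 : t.countP (fun x => decide (x < v)) = 0 := by
                rw [List.countP_eq_zero]
                intro x hx
                simp only [decide_eq_true_eq]
                exact Nat.not_lt.mpr (hbt x hx)
              rw [h1]
              simp
            · have h1 : (nfR t).count v = 0 := by
                rw [← Nat.le_zero, ← List.count_eq_zero_of_not_mem hmem]
                exact (nfR_sublist t).count_le v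
              have h2a : t.countP (fun x => decide (x < v)) = 0 := by
                rw [List.countP_eq_zero]
                intro x hx
                simp only [decide_eq_true_eq]
                exact Nat.not_lt.mpr (hbt x hx)
              have h2 : t.countP (fun x => decide (x ≤ v)) = 0 := by
                rw [countP_le_split, h2a, List.count_eq_zero_of_not_mem hmem]
              rw [h1, h2]
              simp
          rw [List.count_cons, List.count_cons, hcnt]
          have e1 : Odd (2 + t.countP (fun x => decide (x ≤ v))) ↔
              Odd (t.countP (fun x => decide (x ≤ v))) := by
            rw [Nat.odd_iff, Nat.odd_iff]; omega
          by_cases ho : Odd (t.countP (fun x => decide (x ≤ v))) <;>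
            simp [ho, e1, Ne.symm (Nat.ne_of_lt hab')] <;> exact h
        · -- v ∈ t, v ≠ a, b
          have hvt : v ∈ t := by
            rcases List.mem_cons.mp hv with rfl | hv' 
            · exact absurd rfl hva
            rcases List.mem_cons.mp hv' with rfl | hvt
            · exact absurd rfl hvb
            · exact hvt
          have hbv : b < v := Nat.lt_of_le_of_ne (hbt v hvt) (Ne.symm hvb)
          have hav : a < v := hab'.trans hbv
          have e1 : (a :: b :: t).countP (fun x => decide (x < v)) =
              2 + t.countP (fun x => decide (x < v)) := by
            rw [hcp]; simp [hav, hbv]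
          have e2 : (a :: b :: t).countP (fun x => decide (x ≤ v)) =
              2 + t.countP (fun x => decide (x ≤ v)) := by
            rw [hcp]; simp [Nat.le_of_lt hav, Nat.le_of_lt hbv]
          rw [e1, e2, List.count_cons, List.count_cons, ih ht v hvt]
          have p1 : Odd (2 + t.countP (fun x => decide (x < v))) ↔
              Odd (t.countP (fun x => decide (x < v))) := by
            rw [Nat.odd_iff, Nat.odd_iff]; omega
          have p2 : Odd (2 + t.countP (fun x => decide (x ≤ v))) ↔
              Odd (t.countP (fun x => decide (x ≤ v))) := by
            rw [Nat.odd_iff, Nat.odd_iff]; omega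
          simp [p1, p2, hva, hvb, Ne.symm hva, Ne.symm hvb]

/-- stage-two statistic: distinct odd values occurring at least twice. -/
def stO3 (m : List ℕ) : ℕ := (m.toFinset.filter (fun v => Odd v ∧ 2 ≤ m.count v)).card

theorem L2 : ∀ (t : List ℕ), Odd t.length → ∀ b : ℕ, List.Pairwise (· ≤ ·) (b :: t) → AS t →
    (nfO2 (b :: t)).length + 2 * stO3 (b :: t) = (b :: t).length := by
  intro t
  induction t using twoStepRec with
  | h0 => intro h; simp at h
  | h1 x =>
    intro _ b hs _
    have hbx : b ≤ x := (List.pairwise_cons.mp hs).1 x (by simp)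
    by_cases h : b = x ∧ Odd b
    · obtain ⟨heq, hob⟩ := h
      subst heq
      have hnf : nfO2 [b, b] = [] := by
        rw [nfO2_cons₂, if_pos ⟨rfl, hob⟩]
        rfl
      have hst : stO3 [b, b] = 1 := by
        unfold stO3
        have h1 : [b, b].toFinset = {b} := by simp
        have h2 : ([b, b].count b) = 2 := by simp
        rw [h1, Finset.filter_singleton, if_pos ⟨hob, by rw [h2]⟩, Finset.card_singleton]
      rw [hnf, hst]
      simp
    · have hnf : nfO2 [b, x] = [b, x] := by
        rw [nfO2_cons₂, if_neg h]
        rfl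
      have hst : stO3 [b, x] = 0 := by
        unfold stO3
        rw [Finset.card_eq_zero, Finset.filter_eq_empty_iff]
        intro v hv
        simp only [List.toFinset_cons, List.toFinset_nil, Finset.mem_insert,
          Finset.notMem_empty, or_false] at hv
        rintro ⟨hov, hcnt⟩
        by_cases hbeq : b = x
        · have : ¬ Odd b := fun ho => h ⟨hbeq, ho⟩
          rcases hv with rfl | rfl
          · exact this hov
          · rw [← hbeq] at hov; exact this hov
        · have : [b, x].count v ≤ 1 := by
            rcases hv with rfl | rfl
            · simp [List.count_cons, hbeq]
            · simp [List.count_cons, hbeq]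
          omega
      rw [hnf, hst]
      simp
  | h2 x y t' ih =>
    intro hlen b hs hast
    have hxy : x < y := (AS_cons₂ x y t').mp hast |>.1
    have hast' : AS t' := (AS_cons₂ x y t').mp hast |>.2
    have hbx : b ≤ x := (List.pairwise_cons.mp hs).1 x (by simp)
    have hs2 : List.Pairwise (· ≤ ·) (x :: y :: t') := (List.pairwise_cons.mp hs).2
    have hs3 : List.Pairwise (· ≤ ·) (y :: t') := (List.pairwise_cons.mp hs2).2
    have hyt' : ∀ z ∈ t', y ≤ z := (List.pairwise_cons.mp hs3).1
    have hlent' : Odd t'.length := by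
      simp only [List.length_cons] at hlen
      rw [Nat.odd_iff] at hlen ⊢; omega
    have hih := ih hlent' y hs3 hast'
    -- a value in y::t' is ≥ y
    have hyval : ∀ v ∈ y :: t', y ≤ v := by
      intro v hv
      rcases List.mem_cons.mp hv with rfl | hv
      · exact le_refl v
      · exact hyt' v hv
    by_cases hdel : b = x ∧ Odd b
    · obtain ⟨heq, hob⟩ := hdel
      subst heq
      have hnf : nfO2 (b :: b :: y :: t') = nfO2 (y :: t') := by
        rw [nfO2_cons₂, if_pos ⟨rfl, hob⟩]
      have hby : b < y := hxy
      have hst : stO3 (b :: b :: y :: t') = stO3 (y :: t') + 1 := by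
        unfold stO3
        have hset : (b :: b :: y :: t').toFinset.filter
            (fun v => Odd v ∧ 2 ≤ (b :: b :: y :: t').count v) =
            insert b ((y :: t').toFinset.filter
              (fun v => Odd v ∧ 2 ≤ (y :: t').count v)) := by
          apply Finset.ext
          intro v
          simp only [Finset.mem_filter, Finset.mem_insert, List.mem_toFinset]
          constructor
          · rintro ⟨hv, hov, hcnt⟩
            by_cases hvb : v = b
            · exact Or.inl hvb
            · right
              have hvm : v ∈ y :: t' := by
                rcases List.mem_cons.mp hv with heq | hv'
                · exact absurd heq hvb
                rcases List.mem_cons.mp hv' with heq | hv''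
                · exact absurd heq hvb
                · exact hv''
              refine ⟨hvm, hov, ?_⟩
              have : (b :: b :: y :: t').count v = (y :: t').count v := by
                simp [List.count_cons, Ne.symm hvb]
              omega
          · rintro (heq | ⟨hv, hov, hcnt⟩)
            · subst heq
              refine ⟨by simp, hob, ?_⟩
              have : (v :: v :: y :: t').count v = 2 + (y :: t').count v := by
                simp [List.count_cons]
                ring
              omega
            · have hvy : y ≤ v := hyval v hv
              have hvb : v ≠ b := by
                intro heq
                rw [heq] at hvy
                omega
              refine ⟨List.mem_cons_of_mem b (List.mem_cons_of_mem b hv), hov, ?_⟩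
              have : (b :: b :: y :: t').count v = (y :: t').count v := by
                simp [List.count_cons, Ne.symm hvb]
              omega
        rw [hset, Finset.card_insert_of_notMem, Nat.add_comm]
        intro hmem
        rw [Finset.mem_filter, List.mem_toFinset] at hmem
        exact absurd (hyval b hmem.1) (Nat.not_le.mpr hby)
      rw [hnf, hst]
      simp only [List.length_cons] at hih ⊢
      omega
    · have hnf : nfO2 (b :: x :: y :: t') = b :: x :: nfO2 (y :: t') := by
        rw [nfO2_cons₂, if_neg hdel]
      have hst : stO3 (b :: x :: y :: t') = stO3 (y :: t') := by
        unfold stO3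
        have hset : (b :: x :: y :: t').toFinset.filter
            (fun v => Odd v ∧ 2 ≤ (b :: x :: y :: t').count v) =
            (y :: t').toFinset.filter
              (fun v => Odd v ∧ 2 ≤ (y :: t').count v) := by
          apply Finset.ext
          intro v
          simp only [Finset.mem_filter, List.mem_toFinset]
          constructor
          · rintro ⟨hv, hov, hcnt⟩
            by_cases hvb : v = b
            · exfalso
              subst hvb
              by_cases hbeq : v = x
              · exact (fun ho => hdel ⟨hbeq, ho⟩) hov
              · have h0 : (x :: y :: t').count v = 0 := by
                  rw [List.count_eq_zero]
                  intro hmem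
                  rcases List.mem_cons.mp hmem with heq | hmem
                  · exact hbeq heq
                  · have := hyval v hmem
                    have := hbx.trans hxy.le
                    omega
                have : (v :: x :: y :: t').count v = 1 := by
                  rw [List.count_cons, h0]
                  simp
                omega
            · by_cases hvx : v = x
              · exfalso
                subst hvx
                have h0 : (y :: t').count v = 0 := by
                  rw [List.count_eq_zero]
                  intro hmem
                  exact absurd (hyval v hmem) (Nat.not_le.mpr hxy)
                have hbv : ¬ b = v := fun h => hvb h.symm
                have : (b :: v :: y :: t').count v = 1 := by
                  simp [List.count_cons, h0, hbv]
                omega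
              · have hvm : v ∈ y :: t' := by
                  rcases List.mem_cons.mp hv with heq | hv'
                  · exact absurd heq hvb
                  rcases List.mem_cons.mp hv' with heq | hv''
                  · exact absurd heq hvx
                  · exact hv''
                refine ⟨hvm, hov, ?_⟩
                have : (b :: x :: y :: t').count v = (y :: t').count v := by
                  simp [List.count_cons, Ne.symm hvb, Ne.symm hvx]
                omega
          · rintro ⟨hv, hov, hcnt⟩
            have hvy : y ≤ v := hyval v hv
            have hvb : v ≠ b := by omega
            have hvx : v ≠ x := by omega
            refine ⟨List.mem_cons_of_mem b (List.mem_cons_of_mem x hv), hov, ?_⟩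
            have : (b :: x :: y :: t').count v = (y :: t').count v := by
              simp [List.count_cons, Ne.symm hvb, Ne.symm hvx]
            omega
        rw [hset]
      rw [hnf, hst]
      simp only [List.length_cons] at hih ⊢
      omega

/-- stage-two length formula on stage-one normal forms. -/
theorem G2 {s : List ℕ} (hs : List.Pairwise (· ≤ ·) s) (has : AS s) (hodd : Odd s.length) :
    (nfO s).length + 2 * stO3 s = s.length := by
  match s, hs, has, hodd with
  | [], _, _, hodd => simp at hodd
  | [x], _, _, _ =>
    have : stO3 [x] = 0 := by
      unfold stO3
      rw [Finset.card_eq_zero, Finset.filter_eq_empty_iff]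
      intro v hv
      simp only [List.toFinset_cons, List.toFinset_nil, Finset.mem_insert,
        Finset.notMem_empty, or_false] at hv
      subst hv
      rintro ⟨_, hcnt⟩
      simp at hcnt
    simp [nfO, this]
  | a :: b :: t, hs, has, hodd =>
    have hab : a < b := (AS_cons₂ a b t).mp has |>.1
    have hs2 : List.Pairwise (· ≤ ·) (b :: t) := (List.pairwise_cons.mp hs).2
    have hbt : ∀ z ∈ b :: t, b ≤ z := by
      intro z hz
      rcases List.mem_cons.mp hz with rfl | hz
      · exact le_refl z
      · exact (List.pairwise_cons.mp hs2).1 z hz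
    have hlt : Odd t.length := by
      simp only [List.length_cons] at hodd
      rw [Nat.odd_iff] at hodd ⊢; omega
    have hih := L2 t hlt b hs2 ((AS_cons₂ a b t).mp has).2
    have hst : stO3 (a :: b :: t) = stO3 (b :: t) := by
      unfold stO3
      have hset : (a :: b :: t).toFinset.filter
          (fun v => Odd v ∧ 2 ≤ (a :: b :: t).count v) =
          (b :: t).toFinset.filter (fun v => Odd v ∧ 2 ≤ (b :: t).count v) := by
        apply Finset.ext
        intro v
        simp only [Finset.mem_filter, List.mem_toFinset]
        constructor
        · rintro ⟨hv, hov, hcnt⟩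
          by_cases hva : v = a
          · exfalso
            subst hva
            have h0 : (b :: t).count v = 0 := by
              rw [List.count_eq_zero]
              intro hmem
              exact absurd (hbt v hmem) (Nat.not_le.mpr hab)
            have : (v :: b :: t).count v = 1 := by
              rw [List.count_cons, h0]
              simp
            omega
          · have hvm : v ∈ b :: t := by
              rcases List.mem_cons.mp hv with heq | hv'
              · exact absurd heq hva
              · exact hv'
            refine ⟨hvm, hov, ?_⟩
            have : (a :: b :: t).count v = (b :: t).count v := by
              simp [List.count_cons, Ne.symm hva]
            omega
        · rintro ⟨hv, hov, hcnt⟩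
          have hva : v ≠ a := by
            intro hva
            rw [hva] at hv
            exact absurd (hbt a hv) (Nat.not_le.mpr hab)
          refine ⟨List.mem_cons_of_mem a hv, hov, ?_⟩
          have : (a :: b :: t).count v = (b :: t).count v := by
            simp [List.count_cons, Ne.symm hva]
          omega
      rw [hset]
    have hnf : nfO (a :: b :: t) = a :: nfO2 (b :: t) := rfl
    rw [hnf, hst]
    simp only [List.length_cons] at hih ⊢
    omega

/-! ### Parity and counting helpers -/

theorem even_length_of_count_even {m : List ℕ} (h : ∀ e ∈ m, Even (m.count e)) :
    Even m.length := by
  classical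
  have hcard := Multiset.toFinset_sum_count_eq (m : Multiset ℕ)
  have hlen : Multiset.card (m : Multiset ℕ) = m.length := by simp
  rw [hlen] at hcard
  rw [← hcard]
  apply Finset.even_sum
  intro c hc
  rw [Multiset.mem_toFinset] at hc
  have hc' : c ∈ m := by simpa using hc
  have : Multiset.count c (m : Multiset ℕ) = m.count c := by simp
  rw [this]
  exact h c hc'

theorem countP_compl {p q : ℕ → Bool} : ∀ {m : List ℕ}, (∀ x ∈ m, q x = !p x) →
    m.countP p + m.countP q = m.length := by
  intro m
  induction m with
  | nil => intro _; simp
  | cons a t ih =>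
    intro h
    rw [List.countP_cons, List.countP_cons, h a (by simp)]
    have := ih (fun x hx => h x (by simp [hx]))
    by_cases hp : p a <;> simp [hp] <;> omega

/-! ### column lengths -/

theorem colLen_le_length (l : List ℕ) (j : ℕ) : colLen l j ≤ l.length :=
  List.countP_le_length

theorem colLen_anti (l : List ℕ) {i j : ℕ} (h : i ≤ j) : colLen l j ≤ colLen l i := by
  apply List.countP_mono_left
  intro x _ hx
  simp only [decide_eq_true_eq] at hx ⊢
  omega

theorem colLen_succ_count (l : List ℕ) (v : ℕ) :
    colLen l v = colLen l (v + 1) + l.count v := by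
  unfold colLen
  induction l with
  | nil => simp
  | cons a t ih =>
    rw [List.countP_cons, List.countP_cons, List.count_cons, ih]
    rcases lt_trichotomy a v with h | h | h
    · have h1 : ¬ v ≤ a := by omega
      have h2 : ¬ v + 1 ≤ a := by omega
      have h3 : ¬ a = v := by omega
      simp [h1, h2, h3]
    · subst h
      have h2 : ¬ a + 1 ≤ a := by omega
      simp [h2]
      omega
    · have h1 : v ≤ a := by omega
      have h2 : v + 1 ≤ a := by omega
      have h3 : ¬ a = v := by omega
      simp [h1, h2, h3]
      omega

theorem mem_le_foldr_max : ∀ (l : List ℕ), ∀ x ∈ l, x ≤ l.foldr max 0 := by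
  intro l
  induction l with
  | nil => intro x hx; simp at hx
  | cons a t ih =>
    intro x hx
    rcases List.mem_cons.mp hx with rfl | hx
    · exact le_max_left _ _
    · exact (ih x hx).trans (le_max_right _ _)

theorem foldr_max_mem : ∀ (l : List ℕ), l.foldr max 0 = 0 ∨ l.foldr max 0 ∈ l := by
  intro l
  induction l with
  | nil => left; rfl
  | cons a t ih =>
    rcases Nat.le_total a (t.foldr max 0) with h | h
    · have : (a :: t).foldr max 0 = t.foldr max 0 := by
        simp only [List.foldr_cons]; omega
      rw [this]
      rcases ih with h0 | hm
      · left; exact h0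
      · right; exact List.mem_cons_of_mem a hm
    · have : (a :: t).foldr max 0 = a := by
        simp only [List.foldr_cons]; omega
      rw [this]
      right; exact List.mem_cons_self

theorem colLen_max_succ (l : List ℕ) : colLen l (l.foldr max 0 + 1) = 0 := by
  rw [colLen, List.countP_eq_zero]
  intro x hx
  simp only [decide_eq_true_eq]
  have := mem_le_foldr_max l x hx
  omega

theorem colLen_pos_bound {l : List ℕ} {v : ℕ} (h : 0 < colLen l v) : v ≤ l.foldr max 0 := by
  rw [colLen, List.countP_pos_iff] at h
  obtain ⟨x, hx, hvx⟩ := h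
  simp only [decide_eq_true_eq] at hvx
  exact hvx.trans (mem_le_foldr_max l x hx)

/-! ### range counting -/

theorem countP_range_lt (v : ℕ) : ∀ (N : ℕ),
    (List.range N).countP (fun j => decide (j < v)) = min v N := by
  intro N
  induction N with
  | zero => simp
  | succ N ih =>
    rw [List.range_succ, List.countP_append, ih]
    by_cases h : N < v <;> simp [h] <;> omega

theorem countP_downward {N : ℕ} {p : ℕ → Bool}
    (hdown : ∀ i j, i ≤ j → j < N → p j = true → p i = true) :
    ∀ j, j < N → (p j = true ↔ j < (List.range N).countP p) := by
  intro j hj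
  have hsplit : List.range N = List.range (j + 1) ++
      (List.range (N - (j + 1))).map (fun x => (j + 1) + x) := by
    rw [← List.range_add]
    congr 1
    omega
  constructor
  · intro hpj
    rw [hsplit, List.countP_append]
    have h1 : ∀ a ∈ List.range (j + 1), p a = true := by
      intro a ha
      rw [List.mem_range] at ha
      exact hdown a j (by omega) hj hpj
    have hfil : (List.range (j + 1)).filter p = List.range (j + 1) :=
      List.filter_eq_self.mpr h1
    rw [List.countP_eq_length_filter, hfil, List.length_range]
    omega
  · intro hlt
    by_contra hpj
    have hsplit2 : List.range N = List.range j ++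
        (List.range (N - j)).map (fun x => j + x) := by
      rw [← List.range_add]
      congr 1
      omega
    rw [hsplit2, List.countP_append] at hlt
    have h2 : ((List.range (N - j)).map (fun x => j + x)).countP p = 0 := by
      rw [List.countP_eq_zero]
      intro a ha
      simp only [List.mem_map, List.mem_range] at ha
      obtain ⟨x, hx, rfl⟩ := ha
      intro hpa
      exact hpj (hdown j (j + x) (by omega) (by omega) hpa)
    have h3 : (List.range j).countP p ≤ j :=
      le_trans (List.countP_le_length) (by simp)
    omega

/-! ### transpose duality -/

theorem transpose_length (l : List ℕ) : (transposeList l).length = l.foldr max 0 := by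
  simp [transposeList]

theorem transpose_sorted (l : List ℕ) : List.Pairwise (· ≥ ·) (transposeList l) := by
  unfold transposeList
  rw [List.pairwise_map]
  exact (List.pairwise_lt_range).imp (fun h => colLen_anti l (by omega))

theorem transpose_colLen (l : List ℕ) (w : ℕ) :
    colLen (transposeList l) w =
      (List.range (l.foldr max 0)).countP (fun j => decide (w ≤ colLen l (j + 1))) := by
  rw [colLen, transposeList, List.countP_map]
  rfl

theorem transpose_pos {l : List ℕ} {w : ℕ} (hw : w ∈ transposeList l) : 0 < w := by
  rw [transposeList, List.mem_map] at hw
  obtain ⟨j, hj, rfl⟩ := hw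
  rw [List.mem_range] at hj
  rcases foldr_max_mem l with h0 | hm
  · omega
  · rw [colLen, List.countP_pos_iff]
    exact ⟨l.foldr max 0, hm, by simp; omega⟩

/-- forward duality: a corner of `l` gives a value of the transpose. -/
theorem corner_duality {l : List ℕ} {v : ℕ} (h0 : 0 < v)
    (hcorner : colLen l (v + 1) < colLen l v) :
    colLen (transposeList l) (colLen l v) = v ∧ colLen l v ∈ transposeList l := by
  set N := l.foldr max 0 with hN
  have hvN : v ≤ N := colLen_pos_bound (by omega)
  have hcong : ∀ j ∈ List.range N,
      ((decide (colLen l v ≤ colLen l (j + 1))) = true ↔ (decide (j < v)) = true) := by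
    intro j hj
    rw [List.mem_range] at hj
    simp only [decide_eq_true_eq]
    constructor
    · intro hle
      by_contra hjv
      have hv1 : v + 1 ≤ j + 1 := by omega
      have := colLen_anti l hv1
      omega
    · intro hjv
      have hj1 : j + 1 ≤ v := hjv
      exact colLen_anti l hj1
  constructor
  · rw [transpose_colLen, List.countP_congr hcong, countP_range_lt]
    omega
  · rw [transposeList, List.mem_map]
    refine ⟨v - 1, ?_, by congr 1; omega⟩
    rw [List.mem_range]
    omega

/-- backward duality: a value of the transpose is a column length at a corner. -/
theorem value_duality {l : List ℕ} {w : ℕ} (hw : w ∈ transposeList l) :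
    0 < colLen (transposeList l) w ∧
    colLen l (colLen (transposeList l) w) = w ∧
    colLen l (colLen (transposeList l) w + 1) < w := by
  have hw' := hw
  rw [transposeList, List.mem_map] at hw'
  obtain ⟨j₀, hj₀, hj₀w⟩ := hw'
  rw [List.mem_range] at hj₀
  have hwpos : 0 < w := transpose_pos hw
  set N := l.foldr max 0 with hN
  set p : ℕ → Bool := fun j => decide (w ≤ colLen l (j + 1)) with hp
  have hdown : ∀ i j, i ≤ j → j < N → p j = true → p i = true := by
    intro i j hij hjN hpj
    simp only [hp, decide_eq_true_eq] at hpj ⊢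
    exact le_trans hpj (colLen_anti l (by omega))
  have hchar := countP_downward hdown
  have hvcount : colLen (transposeList l) w = (List.range N).countP p :=
    transpose_colLen l w
  set c := (List.range N).countP p with hc
  have hpj₀ : p j₀ = true := by
    simp only [hp, decide_eq_true_eq]
    omega
  have hj₀c : j₀ < c := (hchar j₀ hj₀).mp hpj₀
  have hcN : c ≤ N := by
    rw [hc]
    exact le_trans (List.countP_le_length) (by simp)
  have hcpos : 0 < c := by omega
  have hcv_ge : w ≤ colLen l c := by
    have h1 : p (c - 1) = true := (hchar (c - 1) (by omega)).mpr (by omega)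
    simp only [hp, decide_eq_true_eq] at h1
    have he : c - 1 + 1 = c := by omega
    rwa [he] at h1
  have hcv_le : colLen l c ≤ w := by
    have h2 : colLen l c ≤ colLen l (j₀ + 1) := colLen_anti l (by omega)
    omega
  have hlast : colLen l (c + 1) < w := by
    by_cases hcN' : c < N
    · have h3 : ¬ (p c = true) := by
        intro hpc
        have := (hchar c hcN').mp hpc
        omega
      simp only [hp, decide_eq_true_eq] at h3
      omega
    · have hceq : c = N := by omega
      have h4 := colLen_max_succ l
      rw [← hN] at h4
      rw [hceq]
      omega
  rw [hvcount]
  exact ⟨hcpos, by omega, hlast⟩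

/-! ### padding lemmas -/

theorem padToOdd_length_odd (c : List ℕ) : Odd (padToOdd c).length := by
  unfold padToOdd
  split
  · assumption
  · rename_i h
    rw [Nat.odd_iff] at h ⊢
    simp only [List.length_append, List.length_cons, List.length_nil]
    omega

theorem mem_padToOdd {c : List ℕ} {x : ℕ} (h : x ∈ padToOdd c) : x ∈ c ∨ x = 0 := by
  unfold padToOdd at h
  split at h
  · exact Or.inl h
  · rcases List.mem_append.mp h with h | h
    · exact Or.inl h
    · right; simpa using h

theorem mem_padToOdd' {c : List ℕ} {x : ℕ} (h : x ∈ c) : x ∈ padToOdd c := by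
  unfold padToOdd
  split
  · exact h
  · exact List.mem_append.mpr (Or.inl h)

theorem countP_padToOdd {c : List ℕ} {p : ℕ → Bool} (h0 : p 0 = false) :
    (padToOdd c).countP p = c.countP p := by
  unfold padToOdd
  split
  · rfl
  · rw [List.countP_append]
    simp [List.countP_cons, h0]

theorem count_padToOdd {c : List ℕ} {v : ℕ} (hv : v ≠ 0) :
    (padToOdd c).count v = c.count v := by
  unfold padToOdd
  split
  · rfl
  · rw [List.count_append]
    simp [List.count_cons, Ne.symm hv]

theorem padToOdd_sorted {c : List ℕ} (h : List.Pairwise (· ≥ ·) c) :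
    List.Pairwise (· ≥ ·) (padToOdd c) := by
  unfold padToOdd
  split
  · exact h
  · rw [List.pairwise_append]
    refine ⟨h, by simp, ?_⟩
    intro a _ b hb
    simp only [List.mem_singleton] at hb
    subst hb
    exact Nat.zero_le a

theorem sorted_rev {c : List ℕ} (h : List.Pairwise (· ≥ ·) c) :
    List.Pairwise (· ≤ ·) c.reverse := by
  rw [List.pairwise_reverse]
  exact h

/-! ### parity complement -/

theorem odd_lt_iff_even_ge {m : List ℕ} (hodd : Odd m.length) (v : ℕ) :
    Odd (m.countP (fun x => decide (x < v))) ↔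
      Even (m.countP (fun x => decide (v ≤ x))) := by
  have h := countP_compl (p := fun x => decide (x < v))
    (q := fun x => decide (v ≤ x)) (m := m) ?_
  · rw [Nat.odd_iff] at hodd
    rw [Nat.odd_iff, Nat.even_iff]
    omega
  · intro x _
    by_cases h : x < v
    · simp [h, Nat.not_le.mpr h]
    · simp [h, Nat.not_lt.mp h]

theorem countP_parity_split (p q : ℕ → Bool) : ∀ (l : List ℕ),
    l.countP (fun a => p a && q a) + l.countP (fun a => p a && !q a) = l.countP p := by
  intro l
  induction l with
  | nil => simp
  | cons a t ih =>
    rw [List.countP_cons, List.countP_cons, List.countP_cons]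
    by_cases hp : p a <;> by_cases hq : q a <;> simp [hp, hq] <;> omega

/-! ### the row statistic as a corner count -/

theorem row_ge_parity (l : List ℕ) (hC : ∀ e ∈ l, Odd e → Even (l.count e)) {v : ℕ}
    (hv : 0 < v) :
    (Even (colLen l v) ↔
      Even (((padToOdd l).filter (fun x => decide (Even x))).countP
        (fun x => decide (v ≤ x)))) := by
  have h1 : ((padToOdd l).filter (fun x => decide (Even x))).countP
      (fun x => decide (v ≤ x)) =
      (padToOdd l).countP (fun a => decide (v ≤ a) && decide (Even a)) :=
    List.countP_filter
  have h2 : (padToOdd l).countP (fun a => decide (v ≤ a) && decide (Even a)) =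
      l.countP (fun a => decide (v ≤ a) && decide (Even a)) := by
    apply countP_padToOdd
    simp only [Bool.and_eq_false_iff, decide_eq_false_iff_not]
    left
    omega
  have h3 := countP_parity_split (fun a => decide (v ≤ a)) (fun a => decide (Even a)) l
  have h4 : Even (l.countP (fun a => decide (v ≤ a) && !decide (Even a))) := by
    rw [List.countP_eq_length_filter]
    apply even_length_of_count_even
    intro e he
    have hmem := List.mem_filter.mp he
    have hpred := hmem.2
    simp only [Bool.and_eq_true, decide_eq_true_eq, Bool.not_eq_true',
      decide_eq_false_iff_not] at hpred
    have hodd : Odd e := Nat.not_even_iff_odd.mp hpred.2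
    have hcf := List.count_filter
      (p := fun a => decide (v ≤ a) && !decide (Even a)) (l := l) (a := e)
      (by simp only [Bool.and_eq_true, decide_eq_true_eq, Bool.not_eq_true',
            decide_eq_false_iff_not]
          exact hpred)
    rw [hcf]
    exact hC e hmem.1 hodd
  have hcol : colLen l v = l.countP (fun x => decide (v ≤ x)) := rfl
  rw [h1, h2, hcol]
  rw [Nat.even_iff] at h4 ⊢
  rw [Nat.even_iff]
  omega

theorem R_length_odd (l : List ℕ) (hC : ∀ e ∈ l, Odd e → Even (l.count e)) :
    Odd ((padToOdd l).filter (fun x => decide (Even x))).length := by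
  have hm : Odd (padToOdd l).length := padToOdd_length_odd l
  have hcompl := countP_compl (p := fun x => decide (Even x))
    (q := fun x => decide (¬ Even x)) (m := padToOdd l)
    (by intro x _; by_cases h : Even x <;> simp [h])
  have hoddside : Even ((padToOdd l).countP (fun x => decide (¬ Even x))) := by
    have heq : (padToOdd l).countP (fun x => decide (¬ Even x)) =
        l.countP (fun x => decide (¬ Even x)) := by
      apply countP_padToOdd
      simp
    rw [heq, List.countP_eq_length_filter]
    apply even_length_of_count_even
    intro e he
    have hmem := List.mem_filter.mp he
    have hodd : Odd e := by
      have := hmem.2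
      simp only [decide_eq_true_eq] at this
      exact Nat.not_even_iff_odd.mp this
    have hcf := List.count_filter
      (p := fun x => decide (¬ Even x)) (l := l) (a := e) hmem.2
    rw [hcf]
    exact hC e hmem.1 hodd
  rw [← List.countP_eq_length_filter]
  rw [Nat.odd_iff] at hm ⊢
  rw [Nat.even_iff] at hoddside
  omega

theorem stE_row (l : List ℕ) (hsort : List.Pairwise (· ≥ ·) l)
    (hC : ∀ e ∈ l, Odd e → Even (l.count e)) :
    stE ((padToOdd l).filter (fun x => decide (Even x))).reverse =
      ((Finset.range (l.foldr max 0 + 1)).filter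
        (fun v => Even v ∧ 0 < v ∧ colLen l (v + 1) < colLen l v ∧
          Even (colLen l v))).card := by
  unfold stE
  congr 1
  apply Finset.ext
  intro v
  simp only [Finset.mem_filter, List.mem_toFinset, List.mem_reverse,
    Finset.mem_range, List.countP_reverse, List.toFinset_reverse]
  have hRodd := R_length_odd l hC
  constructor
  · rintro ⟨hvR, hodd⟩
    have hvmemfil := List.mem_filter.mp hvR
    have heven : Even v := by
      have := hvmemfil.2
      simpa using this
    have hv0 : 0 < v := by
      rcases Nat.eq_zero_or_pos v with rfl | h
      · exfalso
        have : ((padToOdd l).filter (fun x => decide (Even x))).countP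
            (fun x => decide (x < 0)) = 0 := by
          rw [List.countP_eq_zero]
          intro a _
          simp
        rw [this] at hodd
        simp at hodd
      · exact h
    have hvl : v ∈ l := by
      rcases mem_padToOdd hvmemfil.1 with h | h
      · exact h
      · omega
    have hcount : 0 < l.count v := List.count_pos_iff.mpr hvl
    have hcorner : colLen l (v + 1) < colLen l v := by
      have := colLen_succ_count l v
      omega
    have hevencol : Even (colLen l v) := by
      rw [row_ge_parity l hC hv0]
      exact (odd_lt_iff_even_ge hRodd v).mp hodd
    have hbound : v ≤ l.foldr max 0 := mem_le_foldr_max l v hvl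
    exact ⟨by omega, heven, hv0, hcorner, hevencol⟩
  · rintro ⟨_, heven, hv0, hcorner, hevencol⟩
    have hcount : 0 < l.count v := by
      have := colLen_succ_count l v
      omega
    have hvl : v ∈ l := List.count_pos_iff.mp hcount
    have hvR : v ∈ (padToOdd l).filter (fun x => decide (Even x)) := by
      rw [List.mem_filter]
      exact ⟨mem_padToOdd' hvl, by simpa using heven⟩
    refine ⟨hvR, ?_⟩
    rw [odd_lt_iff_even_ge hRodd v]
    rw [← row_ge_parity l hC hv0]
    exact hevencol

/-! ### the column statistic -/

theorem mem_transpose_le {l : List ℕ} {w : ℕ} (hw : w ∈ transposeList l) : w ≤ l.length := by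
  rw [transposeList, List.mem_map] at hw
  obtain ⟨j, _, rfl⟩ := hw
  exact colLen_le_length l (j + 1)

theorem col_ge_colLen (l : List ℕ) {w : ℕ} (hw : 0 < w) :
    (padToOdd (transposeList l)).countP (fun x => decide (w ≤ x)) =
      colLen (transposeList l) w := by
  apply countP_padToOdd
  simp only [decide_eq_false_iff_not]
  omega

theorem col_count (l : List ℕ)
    (hspecial : ∀ e ∈ transposeList l, Odd e → Even ((transposeList l).count e)) :
    (nfO (nfR (padToOdd (transposeList l)).reverse)).length =
      2 * ((Finset.range (l.length + 1)).filter
        (fun w => Even w ∧ 0 < w ∧ w ∈ transposeList l ∧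
          Even (colLen (transposeList l) w))).card + 1 := by
  classical
  set T := transposeList l with hT
  set r := (padToOdd T).reverse with hr
  have hCsort : List.Pairwise (· ≥ ·) (padToOdd T) := padToOdd_sorted (transpose_sorted l)
  have hrs : List.Pairwise (· ≤ ·) r := sorted_rev hCsort
  have hrodd : Odd r.length := by
    rw [hr, List.length_reverse]
    exact padToOdd_length_odd T
  have hsodd : Odd (nfR r).length := by
    have hpar := nfR_length_parity r
    rw [Nat.odd_iff] at hrodd ⊢
    omega
  have hG1 : (nfR r).length = 2 * stE r + 1 := by
    rw [G1 r hrs]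
    congr 1
    rw [Nat.odd_iff] at hrodd
    exact hrodd
  have hG2 : (nfO (nfR r)).length + 2 * stO3 (nfR r) = (nfR r).length :=
    G2 (nfR_sorted hrs) (nfR_AS r hrs) hsodd
  set S := r.toFinset.filter
    (fun v => Odd (r.countP (fun x => decide (x < v)))) with hS
  have hstE : stE r = S.card := rfl
  have hsplit : (S.filter (fun v => Odd v)).card +
      (S.filter (fun v => ¬ Odd v)).card = S.card :=
    Finset.card_filter_add_card_filter_not (p := fun v => Odd v)
  -- claim 1 : stO3 s counts odd values of S
  have hclaim1 : stO3 (nfR r) = (S.filter (fun v => Odd v)).card := by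
    unfold stO3
    congr 1
    apply Finset.ext
    intro v
    simp only [hS, Finset.mem_filter, List.mem_toFinset]
    constructor
    · rintro ⟨hvs, hov, hcnt⟩
      have hvr : v ∈ r := (nfR_sublist r).subset hvs
      have hK := K r hrs v hvr
      have hOcp : Odd (r.countP (fun x => decide (x < v))) := by
        by_contra hno
        rw [if_neg hno] at hK
        have : (nfR r).count v ≤ 1 := by
          rw [hK]
          split <;> omega
        omega
      exact ⟨⟨hvr, hOcp⟩, hov⟩
    · rintro ⟨⟨hvr, hOcp⟩, hov⟩
      have hv0 : v ≠ 0 := by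
        intro h
        rw [h] at hov
        exact (by decide : ¬ Odd 0) hov
      have hvC : v ∈ padToOdd T := List.mem_reverse.mp hvr
      have hvT : v ∈ T := by
        rcases mem_padToOdd hvC with h | h
        · exact h
        · exact absurd h hv0
      have hcnteven : Even (r.count v) := by
        rw [hr, List.count_reverse, count_padToOdd hv0]
        exact hspecial v hvT hov
      have hOcq : Odd (r.countP (fun x => decide (x ≤ v))) := by
        rw [countP_le_split]
        rcases hOcp with ⟨k, hk⟩
        rcases hcnteven with ⟨m, hm⟩
        exact ⟨k + m, by omega⟩
      have hK := K r hrs v hvr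
      rw [if_pos hOcp, if_pos hOcq] at hK
      have hcnt2 : (nfR r).count v = 2 := hK
      have hvs : v ∈ nfR r := List.count_pos_iff.mp (by omega)
      exact ⟨hvs, hov, by omega⟩
  -- claim 2 : even values of S are the target corner set
  have hclaim2 : (S.filter (fun v => ¬ Odd v)).card =
      ((Finset.range (l.length + 1)).filter
        (fun w => Even w ∧ 0 < w ∧ w ∈ T ∧ Even (colLen T w))).card := by
    congr 1
    apply Finset.ext
    intro w
    simp only [hS, Finset.mem_filter, List.mem_toFinset, Finset.mem_range]
    constructor
    · rintro ⟨⟨hwr, hOcp⟩, hnodd⟩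
      have heven : Even w := Nat.not_odd_iff_even.mp hnodd
      have hw0 : 0 < w := by
        rcases Nat.eq_zero_or_pos w with rfl | h
        · exfalso
          have : r.countP (fun x => decide (x < 0)) = 0 := by
            rw [List.countP_eq_zero]
            intro a _
            simp
          rw [this] at hOcp
          exact (by decide : ¬ Odd 0) hOcp
        · exact h
      have hwC : w ∈ padToOdd T := List.mem_reverse.mp hwr
      have hwT : w ∈ T := by
        rcases mem_padToOdd hwC with h | h
        · exact h
        · omega
      have hEcol : Even (colLen T w) := by
        have h1 := (odd_lt_iff_even_ge hrodd w).mp hOcp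
        rw [hr, List.countP_reverse, col_ge_colLen l hw0] at h1
        exact h1
      have hbound : w ≤ l.length := mem_transpose_le hwT
      exact ⟨by omega, heven, hw0, hwT, hEcol⟩
    · rintro ⟨_, heven, hw0, hwT, hEcol⟩
      have hwC : w ∈ padToOdd T := mem_padToOdd' hwT
      have hwr : w ∈ r := List.mem_reverse.mpr hwC
      have hOcp : Odd (r.countP (fun x => decide (x < w))) := by
        rw [odd_lt_iff_even_ge hrodd w]
        rw [hr, List.countP_reverse, col_ge_colLen l hw0]
        exact hEcol
      exact ⟨⟨hwr, hOcp⟩, Nat.not_odd_iff_even.mpr heven⟩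
  omega

/-! ### bijection between row corners and column values -/

theorem corner_bij (l : List ℕ) :
    ((Finset.range (l.foldr max 0 + 1)).filter
      (fun v => Even v ∧ 0 < v ∧ colLen l (v + 1) < colLen l v ∧
        Even (colLen l v))).card =
    ((Finset.range (l.length + 1)).filter
      (fun w => Even w ∧ 0 < w ∧ w ∈ transposeList l ∧
        Even (colLen (transposeList l) w))).card := by
  classical
  apply Finset.card_bij' (i := fun v _ => colLen l v)
    (j := fun w _ => colLen (transposeList l) w)
  · intro v hv
    simp only [Finset.mem_filter, Finset.mem_range] at hv ⊢
    obtain ⟨hb, he, h0, hcor, hec⟩ := hv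
    obtain ⟨hdual, hmem⟩ := corner_duality h0 hcor
    refine ⟨by have := colLen_le_length l v; omega, hec, by omega, hmem, ?_⟩
    rw [hdual]
    exact he
  · intro w hw
    simp only [Finset.mem_filter, Finset.mem_range] at hw ⊢
    obtain ⟨hb, hew, hw0, hwT, hecol⟩ := hw
    obtain ⟨hvpos, hcv, hcv1⟩ := value_duality hwT
    have hbound : colLen (transposeList l) w ≤ l.foldr max 0 :=
      colLen_pos_bound (by omega)
    exact ⟨by omega, hecol, hvpos, by omega, by rw [hcv]; exact hew⟩
  · intro v hv
    simp only [Finset.mem_filter, Finset.mem_range] at hv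
    obtain ⟨hb, he, h0, hcor, hec⟩ := hv
    exact (corner_duality h0 hcor).1
  · intro w hw
    simp only [Finset.mem_filter, Finset.mem_range] at hw
    obtain ⟨hb, hew, hw0, hwT, hecol⟩ := hw
    exact (value_duality hwT).2.1

end TypeCAux

/-- Let `l` be a special type C partition of `2n`.
Row procedure: pad the list of parts with one zero to odd length, delete all odd entries,
then repeatedly delete two equal adjacent entries at positions `2t+1` and `2t` (`t ≥ 0`)
until no such pair remains; the remaining number of entries is `2q+1`.
Column procedure: take the padded column list (padded with zeros to odd length);
repeatedly delete two equal adjacent entries at positions `2t+1` and `2t` until no such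
pair remains; then repeatedly delete two equal adjacent entries of odd value at positions
`2t` and `2t-1` until no such pair remains; the remaining number of entries is `2q+1`.
Both counts are independent of all choices, with the same `q`. -/
theorem typeC_LusztigQuotient_rows_eq_columns (n : ℕ) (l : List ℕ)
    (hpart : IsPartitionOf (2 * n) l)
    (hC : ∀ e ∈ l, Odd e → Even (l.count e))
    (hspecial : ∀ e ∈ transposeList l, Odd e → Even ((transposeList l).count e)) :
    ∃ q : ℕ,
      (∀ M : List ℕ,
        Relation.ReflTransGen delStepE ((padToOdd l).filter (fun x => decide (Even x))) M →
        (∀ M', ¬ delStepE M M') → M.length = 2 * q + 1) ∧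
      (∀ M₁ M₂ : List ℕ,
        Relation.ReflTransGen delStepE (padToOdd (transposeList l)) M₁ →
        (∀ M', ¬ delStepE M₁ M') →
        Relation.ReflTransGen delStepOOddVal M₁ M₂ →
        (∀ M', ¬ delStepOOddVal M₂ M') → M₂.length = 2 * q + 1) := by
  classical
  obtain ⟨hsort, -, -⟩ := hpart
  refine ⟨((Finset.range (l.foldr max 0 + 1)).filter
      (fun v => Even v ∧ 0 < v ∧ colLen l (v + 1) < colLen l v ∧
        Even (colLen l v))).card, ?_, ?_⟩
  · intro M hchain hterm
    have hMrev : M.reverse =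
        TypeCAux.nfR ((padToOdd l).filter (fun x => decide (Even x))).reverse := by
      rw [← TypeCAux.terminal_E hterm, TypeCAux.chain_E hchain]
    have hsorted : List.Pairwise (· ≤ ·)
        ((padToOdd l).filter (fun x => decide (Even x))).reverse :=
      TypeCAux.sorted_rev ((TypeCAux.padToOdd_sorted hsort).filter _)
    have hlen : M.length =
        (TypeCAux.nfR ((padToOdd l).filter (fun x => decide (Even x))).reverse).length := by
      rw [← List.length_reverse (as := M), hMrev]
    rw [hlen, TypeCAux.G1 _ hsorted]
    have hmod : ((padToOdd l).filter (fun x => decide (Even x))).reverse.length % 2 = 1 := by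
      rw [List.length_reverse, ← Nat.odd_iff]
      exact TypeCAux.R_length_odd l hC
    rw [hmod, TypeCAux.stE_row l hsort hC]
  · intro M₁ M₂ h1 ht1 h2 ht2
    have hM1 : M₁.reverse = TypeCAux.nfR (padToOdd (transposeList l)).reverse := by
      rw [← TypeCAux.terminal_E ht1, TypeCAux.chain_E h1]
    have hM2 : M₂.reverse =
        TypeCAux.nfO (TypeCAux.nfR (padToOdd (transposeList l)).reverse) := by
      rw [← TypeCAux.terminal_O ht2, TypeCAux.chain_O h2, hM1]
    have hlen : M₂.length =
        (TypeCAux.nfO (TypeCAux.nfR (padToOdd (transposeList l)).reverse)).length := by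
      rw [← List.length_reverse (as := M₂), hM2]
    rw [hlen, TypeCAux.col_count l hspecial, TypeCAux.corner_bij l]
end

section
/- Let λ be a special type D partition of 2n which has at least one odd part (i.e. λ is not very even). Row procedure: from the list of parts of λ delete all even entries; then repeatedly delete two equal adjacent entries occupying positions 2t and 2t−1 for some t ≥ 1, until no such pair remains; let the number of remaining entries be 2q_r+2. Column procedure: take the padded column list of λ (padded with zeros to even length); repeatedly delete two equal adjacent entries at positions 2t+1 and 2t until no such pair remains; then repeatedly delete two equal adjacent entries of odd value at positions 2t and 2t−1 until no such pair remains; let the number of remaining entries be 2q_c+2. Then both counts are independent of the choices of deletions, and q_r = q_c. (This common value q is the rank of the Lusztig quotient Ā(O) ≅ (ℤ/2ℤ)^q of the corresponding special orbit O of SO(2n,ℂ); the statement is the agreement of the row description and the column description of Ā(O).) -/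
/-- pad a list with one zero at the end if necessary so that its length is even. -/
def padToEven (c : List ℕ) : List ℕ := if Even c.length then c else c ++ [0]

/-- Delete two equal adjacent entries occupying positions `2t` and `2t-1` for some `t ≥ 1`. -/
def delStepO (L L' : List ℕ) : Prop :=
  ∃ (a : ℕ) (l₁ l₂ : List ℕ), Odd l₂.length ∧ L = l₁ ++ a :: a :: l₂ ∧ L' = l₁ ++ l₂

namespace TypeDAux


/-- parity of a natural number, as a Bool (`true` = odd). -/
def podd (n : ℕ) : Bool := decide (n % 2 = 1)

lemma podd_add (a b : ℕ) : podd (a + b) = xor (podd a) (podd b) := by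
  rcases Nat.mod_two_eq_zero_or_one a with h | h <;>
  rcases Nat.mod_two_eq_zero_or_one b with h' | h' <;>
  simp [podd, Nat.add_mod, h, h']

lemma podd_succ (a : ℕ) : podd (a + 1) = !(podd a) := by
  rcases Nat.mod_two_eq_zero_or_one a with h | h <;> simp [podd, Nat.add_mod, h]

lemma podd_sub {a b : ℕ} (h : b ≤ a) : podd (a - b) = xor (podd a) (podd b) := by
  have e : (a - b) % 2 = (a + b) % 2 := by omega
  have : podd (a - b) = podd (a + b) := by simp [podd, e]
  rw [this, podd_add]

lemma podd_eq_decide_odd (x : ℕ) : podd x = decide (Odd x) := by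
  simp [podd, Nat.odd_iff]

/-- machine state: (current run value, run start-position parity, run length parity). -/
abbrev St := ℕ × Bool × Bool

def stepSt : Option St → ℕ → Option St
  | none, x => some (x, false, true)
  | some (v, p, mp), x => if x = v then some (v, p, !mp) else some (x, xor p mp, true)

def emitR (r : ℕ → Bool → Bool → ℕ) : Option St → ℕ
  | none => 0
  | some (v, p, mp) => r v mp p

def stepEm (r : ℕ → Bool → Bool → ℕ) : Option St → ℕ → ℕ
  | none, _ => 0
  | some (v, p, mp), x => if x = v then 0 else r v mp p

def Inv (r : ℕ → Bool → Bool → ℕ) : Option St → List ℕ → ℕ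
  | s, [] => emitR r s
  | s, x :: t => stepEm r s x + Inv r (stepSt s x) t

def nextP : Option St → Bool
  | none => false
  | some (_, p, mp) => xor p mp

def compat : Option St → List ℕ → Prop
  | none, _ => True
  | some (v, _, _), L => ∀ x ∈ L, x ≤ v

lemma nextP_step (s : Option St) (x : ℕ) : nextP (stepSt s x) = !(nextP s) := by
  match s with
  | none => simp [stepSt, nextP]
  | some (v, p, mp) =>
    by_cases h : x = v <;> simp [stepSt, nextP, h] <;> cases p <;> cases mp <;> rfl

/-- invariance of `Inv` under a legal deletion. -/
lemma inv_del (r : ℕ → Bool → Bool → ℕ) :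
    ∀ (l₁ : List ℕ) (s : Option St) (a : ℕ) (l₂ : List ℕ),
    List.Pairwise (· ≥ ·) (l₁ ++ a :: a :: l₂) → compat s (l₁ ++ a :: a :: l₂) →
    r a false (xor (nextP s) (podd l₁.length)) = 0 →
    Inv r s (l₁ ++ a :: a :: l₂) = Inv r s (l₁ ++ l₂) := by
  intro l₁
  induction l₁ with
  | nil =>
    intro s a l₂ hsort hcomp h0
    simp only [List.length_nil, podd] at h0
    norm_num at h0
    -- h0 : r a false (xor (nextP s) false) = 0 simplification
    match s with
    | none =>
      simp only [nextP, Bool.xor_false] at h0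
      simp only [List.nil_append, Inv, stepEm, stepSt, if_pos rfl]
      -- state after two a's : some (a, false, false)
      match l₂ with
      | [] => simp [Inv, emitR, h0]
      | b :: t =>
        by_cases hba : b = a
        · subst hba
          simp [Inv, stepEm, stepSt]
        · simp [Inv, stepEm, stepSt, hba, h0]
    | some (v, p, mp) =>
      by_cases hav : a = v
      · subst hav
        simp only [List.nil_append, Inv, stepEm, stepSt, if_pos rfl]
        simp
      · have haltv : a < v := by
          have := hcomp a (by simp)
          omega
        simp only [nextP] at h0
        simp only [List.nil_append, Inv, stepEm, stepSt, if_neg hav]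
        match l₂ with
        | [] => simp [Inv, emitR, stepEm, stepSt, h0]
        | b :: t =>
          have hbv : b ≠ v := by
            have hba : b ≤ a := by
              rcases hsort with _ | ⟨h1, h2⟩
              rcases h2 with _ | ⟨h3, _⟩
              exact h3 b (by simp)
            omega
          by_cases hba : b = a
          · subst hba
            simp [Inv, stepEm, stepSt, hav]
          · simp [Inv, stepEm, stepSt, hav, hba, hbv, h0]
  | cons x t ih =>
    intro s a l₂ hsort hcomp h0
    simp only [List.cons_append, Inv]
    congr 1
    apply ih (stepSt s x) a l₂ hsort.of_cons
    · -- compat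
      match s with
      | none =>
        simp only [stepSt, compat]
        intro y hy
        exact (List.pairwise_cons.mp hsort).1 y hy
      | some (v, p, mp) =>
        by_cases hxv : x = v
        · simp only [stepSt, if_pos hxv, compat]
          intro y hy
          exact hcomp y (by simp [hy])
        · simp only [stepSt, if_neg hxv, compat]
          intro y hy
          exact (List.pairwise_cons.mp hsort).1 y hy
    · rw [nextP_step]
      have : podd (x :: t).length = !(podd t.length) := by
        simp [List.length_cons, podd_succ]
      rw [this] at h0
      rw [← h0]
      congr 1
      cases nextP s <;> cases podd t.length <;> rfl




def PCond (r : ℕ → Bool → Bool → ℕ) : Option St → List ℕ → Prop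
  | _, [] => True
  | s, x :: t =>
    (∀ v p mp, s = some (v, p, mp) → x = v → r v (!mp) p = 1 + r v mp p) ∧
      PCond r (stepSt s x) t

lemma nf_len (r : ℕ → Bool → Bool → ℕ) (h1 : ∀ v p, r v true p = 1) :
    ∀ (L : List ℕ) (s : Option St), PCond r s L → Inv r s L = L.length + emitR r s := by
  intro L
  induction L with
  | nil => intro s _; simp [Inv]
  | cons x t ih =>
    intro s hpc
    obtain ⟨hx, hrec⟩ := hpc
    match s with
    | none =>
      simp only [stepSt] at hrec
      simp only [Inv, stepEm, stepSt]
      rw [ih _ hrec]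
      simp [emitR, h1]
    | some (v, p, mp) =>
      by_cases hxv : x = v
      · simp only [stepSt, if_pos hxv] at hrec
        simp only [Inv, stepEm, stepSt, if_pos hxv]
        rw [ih _ hrec]
        simp only [emitR]
        have := hx v p mp rfl hxv
        simp only [List.length_cons]
        omega
      · simp only [stepSt, if_neg hxv] at hrec
        simp only [Inv, stepEm, stepSt, if_neg hxv]
        rw [ih _ hrec]
        simp only [emitR, List.length_cons]
        simp [h1]
        omega

def stf (s : Option St) (L : List ℕ) : Option St := L.foldl stepSt s

lemma stf_append (s : Option St) (L : List ℕ) (x : ℕ) :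
    stf s (L ++ [x]) = stepSt (stf s L) x := by
  simp [stf, List.foldl_append]

lemma stf_ne_none (L : List ℕ) (hL : L ≠ []) : stf none L ≠ none := by
  induction L using List.reverseRecOn with
  | nil => simp at hL
  | append_singleton L x _ =>
    rw [stf_append]
    match h : stf none L with
    | none => simp [stepSt]
    | some (v, p, mp) =>
      by_cases hxv : x = v <;> simp [stepSt, hxv]

lemma stf_spec : ∀ (L₀ : List ℕ) (v : ℕ) (p mp : Bool), stf none L₀ = some (v, p, mp) →
    ∃ (l' : List ℕ) (m : ℕ), 0 < m ∧ L₀ = l' ++ List.replicate m v ∧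
      p = podd l'.length ∧ mp = podd m := by
  intro L₀
  induction L₀ using List.reverseRecOn with
  | nil => intro v p mp h; simp [stf] at h
  | append_singleton L x ih =>
    intro v p mp h
    rw [stf_append] at h
    match hL : stf none L with
    | none =>
      have : L = [] := by
        by_contra hne
        exact stf_ne_none L hne hL
      subst this
      simp only [hL, stepSt] at h
      simp only [Option.some.injEq, Prod.mk.injEq] at h
      obtain ⟨rfl, rfl, rfl⟩ := h
      exact ⟨[], 1, by norm_num, by simp, by simp [podd], by simp [podd]⟩
    | some (w, p₀, m₀) =>
      obtain ⟨l', m, hm, hLeq, hp₀, hm₀⟩ := ih w p₀ m₀ hL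
      rw [hL] at h
      by_cases hxw : x = w
      · simp only [stepSt, if_pos hxw] at h
        simp only [Option.some.injEq, Prod.mk.injEq] at h
        obtain ⟨rfl, rfl, rfl⟩ := h
        refine ⟨l', m + 1, by omega, ?_, hp₀, ?_⟩
        · rw [hLeq, hxw, List.replicate_succ' (n := m) (a := w), ← List.append_assoc]
        · rw [podd_succ, hm₀]
      · simp only [stepSt, if_neg hxw] at h
        simp only [Option.some.injEq, Prod.mk.injEq] at h
        obtain ⟨rfl, hpeq, rfl⟩ := h
        refine ⟨L, 1, by omega, by simp, ?_, by simp [podd]⟩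
        rw [hLeq]
        simp only [List.length_append, List.length_replicate, podd_add]
        rw [← hpeq, hp₀, hm₀]

lemma pcond_of (r : ℕ → Bool → Bool → ℕ) (cond : ℕ → Bool → Prop)
    (hA : ∀ v p, cond v p → r v false p = 2) (h1 : ∀ v p, r v true p = 1)
    (hB : ∀ v, cond v false → cond v true → False) :
    ∀ (rest L₀ : List ℕ),
      (∀ (a : ℕ) (l₁ l₂ : List ℕ), L₀ ++ rest = l₁ ++ a :: a :: l₂ →
        cond a (podd l₁.length)) →
      PCond r (stf none L₀) rest := by
  intro rest
  induction rest with
  | nil => intro L₀ _; trivial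
  | cons x t ih =>
    intro L₀ hc
    constructor
    · intro v p mp hs hxv
      subst hxv
      obtain ⟨l', m, hm, hL₀, hp, hmp⟩ := stf_spec L₀ x p mp hs
      -- decomposition with l₁ = l' ++ replicate (m-1) x
      have hdec1 : L₀ ++ x :: t = (l' ++ List.replicate (m - 1) x) ++ x :: x :: t := by
        rw [hL₀]
        have : List.replicate m x = List.replicate (m - 1) x ++ [x] := by
          conv_lhs => rw [show m = (m - 1) + 1 by omega]
          exact List.replicate_succ' (n := m-1) (a := x)
        rw [this]
        simp
      have c1 := hc x _ _ hdec1
      have hlen1 : podd (l' ++ List.replicate (m - 1) x).length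
          = xor (podd l'.length) (podd (m - 1)) := by
        simp [List.length_append, podd_add]
      by_cases hmp' : mp = true
      · -- m odd
        have hm1 : podd (m - 1) = false := by
          have : m = (m - 1) + 1 := by omega
          rw [this] at hmp
          rw [podd_succ] at hmp
          rw [hmp'] at hmp
          simp at hmp
          rw [hmp]
        rw [hlen1, hm1, ← hp] at c1
        simp only [Bool.xor_false] at c1
        rw [hmp']
        simp only [Bool.not_true]
        rw [hA x p c1, h1]
      · -- m even, m >= 2 : contradiction
        have hmp'' : mp = false := by cases mp <;> tauto
        have hm2 : 2 ≤ m ∧ m % 2 = 0 := by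
          rw [hmp''] at hmp
          simp [podd] at hmp
          omega
        have hdec2 : L₀ ++ x :: t = (l' ++ List.replicate (m - 2) x) ++ x :: x :: (x :: t) := by
          rw [hL₀]
          have : List.replicate m x = List.replicate (m - 2) x ++ [x, x] := by
            conv_lhs => rw [show m = (m - 2) + 1 + 1 by omega]
            rw [List.replicate_succ' (n := m-2+1) (a := x), List.replicate_succ' (n := m-2) (a := x)]
            simp
          rw [this]
          simp
        have c2 := hc x _ _ hdec2
        have hlen2 : podd (l' ++ List.replicate (m - 2) x).length
            = xor (podd l'.length) (podd (m - 2)) := by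
          simp [List.length_append, podd_add]
        have hparm1 : podd (m - 1) = true := by simp [podd]; omega
        have hparm2 : podd (m - 2) = false := by simp [podd]; omega
        rw [hlen1, hparm1, ← hp] at c1
        rw [hlen2, hparm2, ← hp] at c2
        simp only [Bool.xor_false, Bool.xor_true] at c1 c2
        exfalso
        cases p with
        | false => exact hB x c2 c1
        | true => exact hB x c1 c2
    · have hstf : stepSt (stf none L₀) x = stf none (L₀ ++ [x]) := (stf_append none L₀ x).symm
      rw [hstf]
      apply ih (L₀ ++ [x])
      intro a l₁ l₂ hdec
      apply hc
      rw [← hdec]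
      simp




/-! ### runs -/

def unpack : List (ℕ × ℕ) → List ℕ
  | [] => []
  | (u, n) :: R => List.replicate n u ++ unpack R

def topu : List (ℕ × ℕ) → ℕ
  | [] => 0
  | (u, _) :: _ => u

/-- run list validity: strictly decreasing values, positive multiplicities. -/
def valid (R : List (ℕ × ℕ)) : Prop :=
  R.Pairwise (fun a b => b.1 < a.1) ∧ ∀ q ∈ R, 0 < q.2

lemma valid_tail {q R} (h : valid (q :: R)) : valid R :=
  ⟨(List.pairwise_cons.mp h.1).2, fun x hx => h.2 x (by simp [hx])⟩

lemma mem_unpack_le : ∀ (R : List (ℕ × ℕ)), valid R → ∀ x ∈ unpack R, x ≤ topu R := by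
  intro R
  induction R with
  | nil => intro _ x hx; simp [unpack] at hx
  | cons q R ih =>
    obtain ⟨u, n⟩ := q
    intro hR x hx
    simp only [unpack, List.mem_append] at hx
    rcases hx with hx | hx
    · rw [List.eq_of_mem_replicate hx]; simp [topu]
    · have hx' := ih (valid_tail hR) x hx
      have : topu R ≤ u := by
        match R with
        | [] => simp [topu]
        | (w, m) :: R' =>
          have := (List.pairwise_cons.mp hR.1).1 (w, m) (by simp)
          simp only [topu]
          omega
      simp only [topu]; omega

lemma mem_unpack_of_mem : ∀ (R : List (ℕ × ℕ)), (∀ q ∈ R, 0 < q.2) →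
    ∀ q ∈ R, q.1 ∈ unpack R := by
  intro R
  induction R with
  | nil => intro _ q hq; simp at hq
  | cons p R ih =>
    obtain ⟨u, n⟩ := p
    intro hpos q hq
    simp only [List.mem_cons] at hq
    rcases hq with rfl | hq
    · simp only [unpack, List.mem_append]
      left
      have hn : 0 < n := by simpa using hpos (u,n) (by simp)
      exact List.mem_replicate.mpr ⟨by omega, rfl⟩
    · simp only [unpack, List.mem_append]
      right
      exact ih (fun x hx => hpos x (by simp [hx])) q hq

lemma count_unpack : ∀ (R : List (ℕ × ℕ)), valid R → ∀ q ∈ R, (unpack R).count q.1 = q.2 := by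
  intro R
  induction R with
  | nil => intro _ q hq; simp at hq
  | cons p R ih =>
    obtain ⟨u, n⟩ := p
    intro hR q hq
    simp only [List.mem_cons] at hq
    have hcnt : ∀ x, (unpack ((u,n) :: R)).count x
        = (if u = x then n else 0) + (unpack R).count x := by
      intro x
      simp [unpack, List.count_append, List.count_replicate]
    rcases hq with rfl | hq
    · rw [hcnt]
      have : (unpack R).count u = 0 := by
        rw [List.count_eq_zero]
        intro hmem
        have h1 := mem_unpack_le R (valid_tail hR) u hmem
        have h2 : topu R < u := by
          match R with
          | [] => simp [unpack] at hmem
          | (w, m) :: R' =>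
            have := (List.pairwise_cons.mp hR.1).1 (w, m) (by simp)
            simpa [topu] using this
        omega
      rw [if_pos rfl, this]
      simp
    · rw [hcnt]
      have hlt : q.1 < u := (List.pairwise_cons.mp hR.1).1 q hq
      rw [if_neg (by omega)]
      simp [ih (valid_tail hR) q hq]

lemma sorted_unpack : ∀ (R : List (ℕ × ℕ)), valid R → List.Pairwise (· ≥ ·) (unpack R) := by
  intro R
  induction R with
  | nil => simp [unpack]
  | cons p R ih =>
    obtain ⟨u, n⟩ := p
    intro hR
    simp only [unpack]
    rw [List.pairwise_append]
    refine ⟨List.pairwise_replicate.mpr (by simp), ih (valid_tail hR), ?_⟩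
    intro a ha b hb
    rw [List.eq_of_mem_replicate ha]
    have h1 := mem_unpack_le R (valid_tail hR) b hb
    have h2 : topu R ≤ u := by
      match R with
      | [] => simp [topu]
      | (w, m) :: R' =>
        have := (List.pairwise_cons.mp hR.1).1 (w, m) (by simp)
        simp only [topu]; omega
    omega

lemma length_unpack : ∀ (R : List (ℕ × ℕ)), (unpack R).length = (R.map Prod.snd).sum := by
  intro R
  induction R with
  | nil => simp [unpack]
  | cons p R ih => obtain ⟨u,n⟩ := p; simp [unpack, ih]

/-! ### rle -/

def rle : List ℕ → List (ℕ × ℕ)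
  | [] => []
  | x :: t =>
    match rle t with
    | [] => [(x, 1)]
    | (v, m) :: R => if x = v then (x, m + 1) :: R else (x, 1) :: (v, m) :: R

lemma unpack_rle : ∀ l : List ℕ, unpack (rle l) = l := by
  intro l
  induction l with
  | nil => simp [rle, unpack]
  | cons x t ih =>
    match h : rle t with
    | [] =>
      rw [h] at ih
      simp only [unpack] at ih
      simp [rle, h, unpack, ← ih]
    | (v, m) :: R =>
      rw [h] at ih
      by_cases hxv : x = v
      · subst hxv
        simp only [rle, h, if_pos rfl]
        simp only [unpack, List.replicate_succ] at ih ⊢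
        simp [ih]
        rw [← ih]; simp [unpack, List.replicate_succ]
      · simp only [rle, h, if_neg hxv]
        simp only [unpack] at ih
        simp [unpack, ih]

lemma topu_rle (x : ℕ) (t : List ℕ) : topu (rle (x :: t)) = x := by
  match h : rle t with
  | [] => simp [rle, h, topu]
  | (v, m) :: R =>
    by_cases hxv : x = v <;> simp [rle, h, hxv, topu]

lemma valid_rle : ∀ l : List ℕ, List.Pairwise (· ≥ ·) l → valid (rle l) := by
  intro l
  induction l with
  | nil => exact fun _ => ⟨by simp [rle], by simp [rle]⟩
  | cons x t ih =>
    intro hs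
    have hst := (List.pairwise_cons.mp hs).2
    have hv := ih hst
    match h : rle t with
    | [] =>
      simp only [rle, h]
      exact ⟨by simp, by simp⟩
    | (v, m) :: R =>
      rw [h] at hv
      have hvx : v ≤ x := by
        cases t with
        | nil => simp [rle] at h
        | cons y t' =>
          have hvy : v = y := by
            have := topu_rle y t'
            rw [h] at this
            simpa [topu] using this
          subst hvy
          exact (List.pairwise_cons.mp hs).1 v (by simp)
      have hr : rle (x :: t) = if x = v then (x, m + 1) :: R else (x, 1) :: (v, m) :: R := by
        simp [rle, h]
      by_cases hxv : x = v
      · subst hxv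
        rw [hr, if_pos rfl]
        constructor
        · rw [List.pairwise_cons]
          exact ⟨(List.pairwise_cons.mp hv.1).1, (List.pairwise_cons.mp hv.1).2⟩
        · intro q hq
          simp only [List.mem_cons] at hq
          rcases hq with rfl | hq
          · simp
          · exact hv.2 q (by simp [hq])
      · have hlt : v < x := by omega
        rw [hr, if_neg hxv]
        constructor
        · rw [List.pairwise_cons]
          constructor
          · intro q hq
            simp only [List.mem_cons] at hq
            rcases hq with rfl | hq
            · simpa using hlt
            · have := (List.pairwise_cons.mp hv.1).1 q hq
              simp only
              omega
          · exact hv.1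
        · intro q hq
          simp only [List.mem_cons] at hq
          rcases hq with rfl | hq
          · simp
          · exact hv.2 q (by simpa using hq)

/-! ### parity-level run sums -/

def prs (r : Bool → Bool → Bool → ℕ) : Bool → List (Bool × Bool) → ℕ
  | _, [] => 0
  | p, (vo, mo) :: S => r vo mo p + prs r (xor p mo) S

def pruns (S : List (ℕ × ℕ)) : List (Bool × Bool) := S.map (fun q => (podd q.1, podd q.2))

def rof (r' : Bool → Bool → Bool → ℕ) : ℕ → Bool → Bool → ℕ := fun v => r' (podd v)

def mos : List (Bool × Bool) → Bool
  | [] => false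
  | (_, mo) :: S => xor mo (mos S)

lemma prs_append (r : Bool → Bool → Bool → ℕ) :
    ∀ (A B : List (Bool × Bool)) (p : Bool),
    prs r p (A ++ B) = prs r p A + prs r (xor p (mos A)) B := by
  intro A
  induction A with
  | nil => intro B p; simp [prs, mos]
  | cons q A ih =>
    obtain ⟨vo, mo⟩ := q
    intro B p
    simp only [List.cons_append, prs, mos, List.append_eq, ih, Bool.xor_assoc, Nat.add_assoc]

lemma mos_pruns : ∀ S : List (ℕ × ℕ), mos (pruns S) = podd ((S.map Prod.snd).sum) := by
  intro S
  induction S with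
  | nil => simp [pruns, mos, podd]
  | cons q S ih =>
    obtain ⟨v, m⟩ := q
    have h0 : mos (pruns ((v, m) :: S)) = xor (podd m) (mos (pruns S)) := rfl
    rw [h0, ih]
    simp [podd_add]

lemma inv_replicate (r : ℕ → Bool → Bool → ℕ) :
    ∀ (k : ℕ) (v : ℕ) (p mp : Bool) (X : List ℕ),
    Inv r (some (v, p, mp)) (List.replicate k v ++ X)
      = Inv r (some (v, p, xor mp (podd k))) X := by
  intro k
  induction k with
  | zero => intro v p mp X; simp [podd]
  | succ k ih =>
    intro v p mp X
    simp only [List.replicate_succ, List.cons_append, Inv]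
    rw [show stepEm r (some (v, p, mp)) v = 0 by simp [stepEm],
        show stepSt (some (v, p, mp)) v = some (v, p, !mp) by simp [stepSt]]
    rw [ih]
    have : xor (!mp) (podd k) = xor mp (podd (k+1)) := by
      rw [podd_succ]
      cases mp <;> cases podd k <;> rfl
    rw [this]
    simp

lemma machruns_aux (r' : Bool → Bool → Bool → ℕ) :
    ∀ (S : List (ℕ × ℕ)) (v : ℕ) (p mp : Bool),
    valid S → (∀ q ∈ S, q.1 < v) →
    Inv (rof r') (some (v, p, mp)) (unpack S)
      = r' (podd v) mp p + prs r' (xor p mp) (pruns S) := by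
  intro S
  induction S with
  | nil => intro v p mp _ _; simp [unpack, Inv, emitR, rof, prs, pruns]
  | cons q S ih =>
    obtain ⟨w, m⟩ := q
    intro v p mp hval hlt
    have hwv : w ≠ v := by have := hlt (w,m) (by simp); simp at this; omega
    have hm : 0 < m := by have := hval.2 (w,m) (by simp); simpa using this
    simp only [unpack]
    have : List.replicate m w = w :: List.replicate (m-1) w := by
      conv_lhs => rw [show m = (m-1)+1 by omega]
      simp [List.replicate_succ]
    rw [this]
    simp only [List.cons_append, Inv, stepEm, stepSt, if_neg hwv]
    erw [inv_replicate]
    have hpm : xor true (podd (m-1)) = podd m := by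
      have h2 : podd m = !(podd (m-1)) := by
        conv_lhs => rw [show m = (m-1)+1 by omega]
        rw [podd_succ]
      rw [h2]
      cases podd (m-1) <;> rfl
    rw [hpm]
    rw [ih w (xor p mp) (podd m) (valid_tail hval)
      (fun q hq => (List.pairwise_cons.mp hval.1).1 q hq)]
    show r' (podd v) mp p + (r' (podd w) (podd m) (xor p mp) + prs r' (xor (xor p mp) (podd m)) (pruns S)) = _
    simp [prs, pruns]

lemma machruns (r' : Bool → Bool → Bool → ℕ) (S : List (ℕ × ℕ)) (hval : valid S) :
    Inv (rof r') none (unpack S) = prs r' false (pruns S) := by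
  match S with
  | [] => simp [unpack, Inv, emitR, prs, pruns]
  | (w, m) :: S' =>
    have hm : 0 < m := by have := hval.2 (w,m) (by simp); simpa using this
    simp only [unpack]
    have : List.replicate m w = w :: List.replicate (m-1) w := by
      conv_lhs => rw [show m = (m-1)+1 by omega]
      simp [List.replicate_succ]
    rw [this]
    simp only [List.cons_append, Inv, stepEm, stepSt]
    erw [inv_replicate]
    have hpm : xor true (podd (m-1)) = podd m := by
      have h2 : podd m = !(podd (m-1)) := by
        conv_lhs => rw [show m = (m-1)+1 by omega]
        rw [podd_succ]
      rw [h2]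
      cases podd (m-1) <;> rfl
    rw [hpm]
    rw [machruns_aux r' S' w false (podd m) (valid_tail hval)
      (fun q hq => (List.pairwise_cons.mp hval.1).1 q hq)]
    simp [pruns, prs]




lemma unpack_append : ∀ (A B : List (ℕ × ℕ)), unpack (A ++ B) = unpack A ++ unpack B := by
  intro A B
  induction A with
  | nil => simp [unpack]
  | cons q A ih => obtain ⟨u,n⟩ := q; simp [unpack, ih]

def colRuns : List (ℕ × ℕ) → List (ℕ × ℕ)
  | [] => []
  | (u, n) :: R => (colRuns R).map (fun q => (q.1 + n, q.2)) ++ [(n, u - topu R)]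

/-- value positivity of a run list. -/
def vpos (R : List (ℕ × ℕ)) : Prop := ∀ q ∈ R, 0 < q.1

lemma foldr_max_append (A B : List ℕ) :
    (A ++ B).foldr max 0 = max (A.foldr max 0) (B.foldr max 0) := by
  induction A with
  | nil => simp
  | cons x A ih => simp [ih, max_assoc]

lemma foldr_max_replicate (n u : ℕ) (hn : 0 < n) :
    (List.replicate n u).foldr max 0 = u := by
  induction n with
  | zero => omega
  | succ n ih =>
    simp only [List.replicate_succ, List.foldr_cons]
    rcases Nat.eq_zero_or_pos n with rfl | hn'
    · simp
    · rw [ih hn']; simp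

lemma foldr_max_unpack : ∀ R, valid R → (unpack R).foldr max 0 = topu R := by
  intro R
  induction R with
  | nil => simp [unpack, topu]
  | cons q R ih =>
    obtain ⟨u, n⟩ := q
    intro hR
    have hn : 0 < n := by simpa using hR.2 (u,n) (by simp)
    have htop : topu R ≤ u := by
      match R with
      | [] => simp [topu]
      | (w, m) :: R' =>
        have := (List.pairwise_cons.mp hR.1).1 (w, m) (by simp)
        simp only [topu]; omega
    simp only [unpack, foldr_max_append, foldr_max_replicate n u hn, ih (valid_tail hR)]
    show max u (topu R) = u
    omega

lemma colLen_append (A B : List ℕ) (j : ℕ) :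
    colLen (A ++ B) j = colLen A j + colLen B j := by unfold colLen; exact List.countP_append

lemma colLen_replicate (n u j : ℕ) :
    colLen (List.replicate n u) j = if j ≤ u then n else 0 := by
  induction n with
  | zero => simp [colLen]
  | succ n ih =>
    simp only [List.replicate_succ, colLen, List.countP_cons] at ih ⊢
    by_cases h : j ≤ u <;> simp [h] at ih ⊢ <;> omega

lemma colLen_eq_zero (L : List ℕ) (j : ℕ) (h : ∀ x ∈ L, x < j) : colLen L j = 0 := by
  rw [colLen, List.countP_eq_zero]
  intro x hx
  simpa using Nat.not_le.mpr (h x hx)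

lemma transpose_unpack : ∀ R, valid R → transposeList (unpack R) = unpack (colRuns R) := by
  intro R
  induction R with
  | nil => simp [unpack, transposeList, colRuns]
  | cons q R ih =>
    obtain ⟨u, n⟩ := q
    intro hR
    have hn : 0 < n := by simpa using hR.2 (u,n) (by simp)
    have htop : topu R ≤ u := by
      match R with
      | [] => simp [topu]
      | (w, m) :: R' =>
        have := (List.pairwise_cons.mp hR.1).1 (w, m) (by simp)
        simp only [topu]; omega
    set u' := topu R with hu'
    have hfold : (unpack ((u,n) :: R)).foldr max 0 = u := foldr_max_unpack _ hR
    have hmem_le : ∀ x ∈ unpack R, x ≤ u' := mem_unpack_le R (valid_tail hR)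
    have hrange : List.range u = List.range u' ++ (List.range (u - u')).map (fun i => u' + i) := by
      rw [← List.range_add]
      congr 1
      omega
    simp only [transposeList, hfold, hrange, List.map_append]
    rw [show colRuns ((u,n)::R) = (colRuns R).map (fun q => (q.1+n,q.2)) ++ [(n, u - topu R)]
        from rfl, unpack_append]
    congr 1
    · -- first piece
      have hcl : ∀ j ∈ List.range u', colLen (unpack ((u,n)::R)) (j+1)
          = colLen (unpack R) (j+1) + n := by
        intro j hj
        have hj' : j < u' := List.mem_range.mp hj
        simp only [unpack, colLen_append, colLen_replicate]
        rw [if_pos (by omega)]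
        omega
      rw [List.map_congr_left hcl]
      -- want : map (c + n) range u' = unpack (map (fun q => (q.1+n,q.2)) (colRuns R))
      have hmap : ∀ S : List (ℕ × ℕ), unpack (S.map (fun q => (q.1 + n, q.2)))
          = (unpack S).map (fun x => x + n) := by
        intro S
        induction S with
        | nil => simp [unpack]
        | cons p S ihS =>
          obtain ⟨a, b⟩ := p
          simp [unpack, ihS, List.map_replicate]
      rw [hmap, ← ih (valid_tail hR)]
      simp only [transposeList, foldr_max_unpack R (valid_tail hR)]
      rw [List.map_map]
      rfl
    · -- second piece
      have hcl : ∀ j ∈ (List.range (u - u')).map (fun i => u' + i),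
          colLen (unpack ((u,n)::R)) (j+1) = n := by
        intro j hj
        simp only [List.mem_map, List.mem_range] at hj
        obtain ⟨i, hi, rfl⟩ := hj
        simp only [unpack, colLen_append, colLen_replicate]
        rw [if_pos (by omega)]
        rw [colLen_eq_zero (unpack R) (u' + i + 1) (fun x hx => by have := hmem_le x hx; omega)]
        omega
      rw [List.map_congr_left hcl]
      have : ∀ (L : List ℕ) (c : ℕ), L.map (fun _ => c) = List.replicate L.length c := by
        intro L c
        induction L with
        | nil => simp
        | cons x L ihL => simp [ihL, List.replicate_succ]
      rw [List.map_map]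
      rw [show ((fun j => n) ∘ fun i => u' + i) = (fun _ => n) from rfl]
      rw [this, List.length_range]
      simp [unpack]
      rfl

lemma colRuns_vpos : ∀ R, valid R → vpos R → vpos (colRuns R) := by
  intro R
  induction R with
  | nil => intro _ _ q hq; simp [colRuns] at hq
  | cons p R ih =>
    obtain ⟨u, n⟩ := p
    intro hval hvp q hq
    have hn : 0 < n := by simpa using hval.2 (u,n) (by simp)
    simp only [colRuns, List.mem_append, List.mem_map, List.mem_singleton] at hq
    rcases hq with ⟨a, ha, rfl⟩ | rfl
    · have := ih (valid_tail hval) (fun x hx => hvp x (by simp [hx])) a ha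
      simp only
      omega
    · simpa using hn

lemma colRuns_valid : ∀ R, valid R → vpos R → valid (colRuns R) := by
  intro R
  induction R with
  | nil => exact fun _ _ => ⟨by simp [colRuns], by simp [colRuns]⟩
  | cons p R ih =>
    obtain ⟨u, n⟩ := p
    intro hval hvp
    have hn : 0 < n := by simpa using hval.2 (u,n) (by simp)
    have htop : topu R < u := by
      match R with
      | [] => simpa [topu] using hvp (u,n) (by simp)
      | (w, m) :: R' =>
        have := (List.pairwise_cons.mp hval.1).1 (w, m) (by simp)
        simpa [topu] using this
    have ihv := ih (valid_tail hval) (fun x hx => hvp x (by simp [hx]))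
    have ihp := colRuns_vpos R (valid_tail hval) (fun x hx => hvp x (by simp [hx]))
    constructor
    · simp only [colRuns]
      rw [List.pairwise_append]
      refine ⟨?_, by simp, ?_⟩
      · rw [List.pairwise_map]
        exact ihv.1.imp (fun h => by simp only; omega)
      · intro a ha b hb
        simp only [List.mem_map] at ha
        obtain ⟨c, hc, rfl⟩ := ha
        simp only [List.mem_singleton] at hb
        subst hb
        have := ihp c hc
        simp only
        omega
    · intro q hq
      simp only [colRuns, List.mem_append, List.mem_map, List.mem_singleton] at hq
      rcases hq with ⟨a, ha, rfl⟩ | rfl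
      · exact ihv.2 a ha
      · simp only
        omega

lemma sum_colRuns : ∀ R, valid R → ((colRuns R).map Prod.snd).sum = topu R := by
  intro R
  induction R with
  | nil => simp [colRuns, topu]
  | cons p R ih =>
    obtain ⟨u, n⟩ := p
    intro hval
    have htop : topu R ≤ u := by
      match R with
      | [] => simp [topu]
      | (w, m) :: R' =>
        have := (List.pairwise_cons.mp hval.1).1 (w, m) (by simp)
        simp only [topu]; omega
    simp only [colRuns, List.map_append, List.sum_append, List.map_map]
    have : (Prod.snd ∘ fun q : ℕ × ℕ => (q.1 + n, q.2)) = Prod.snd := rfl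
    rw [this, ih (valid_tail hval)]
    simp only [List.map_cons, List.map_nil, List.sum_cons, List.sum_nil]
    show topu R + (u - topu R + 0) = u
    omega




def rOp : Bool → Bool → Bool → ℕ := fun _ mo p => if mo then 1 else if p then 0 else 2
def rCp : Bool → Bool → Bool → ℕ :=
  fun vo mo p => if mo then 1 else if p then (if vo then 0 else 2) else 0
def rCps (s : Bool) : Bool → Bool → Bool → ℕ := fun vo mo p => rCp (xor vo s) mo p

def hval (R : List (ℕ × ℕ)) (b : Bool) : ℕ :=
  if podd (topu R) = true ∧ b = false then 1 else 0

def rowR (R : List (ℕ × ℕ)) : List (ℕ × ℕ) := R.filter (fun q => podd q.1)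

def PSp (b : Bool) (R : List (ℕ × ℕ)) : Prop :=
  ∀ q ∈ colRuns R, xor (podd q.1) b = true → podd q.2 = false

lemma scalar_id : ∀ (vo e1 e2 nu b : Bool), (e1 = false → nu = false) →
    (xor b nu = true → xor e1 e2 = false) →
    (if e1 = true then rOp vo nu b else 0) + (if e2 = true ∧ xor b nu = false then 1 else 0)
      = (if e1 = true ∧ b = false then 1 else 0) + rCp (xor nu b) (xor e1 e2) e2 := by
  decide

lemma pruns_append (A B : List (ℕ × ℕ)) : pruns (A ++ B) = pruns A ++ pruns B := by
  simp [pruns]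

lemma pruns_shift (S : List (ℕ × ℕ)) (n : ℕ) :
    pruns (S.map (fun q => (q.1 + n, q.2)))
      = (pruns S).map (fun q => (xor q.1 (podd n), q.2)) := by
  simp only [pruns, List.map_map]
  apply List.map_congr_left
  intro q _
  simp [podd_add]

lemma mos_mapxor (t : Bool) : ∀ S : List (Bool × Bool),
    mos (S.map (fun q => (xor q.1 t, q.2))) = mos S := by
  intro S
  induction S with
  | nil => simp [mos]
  | cons q S ih => obtain ⟨vo, mo⟩ := q; simp [mos, ih]

lemma prs_rCps_shift (s t : Bool) : ∀ (S : List (Bool × Bool)) (p : Bool),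
    prs (rCps s) p (S.map (fun q => (xor q.1 t, q.2))) = prs (rCps (xor s t)) p S := by
  intro S
  induction S with
  | nil => intro p; simp [prs]
  | cons q S ih =>
    obtain ⟨vo, mo⟩ := q
    intro p
    simp only [List.map_cons, prs, ih]
    congr 1
    show rCp (xor (xor vo t) s) mo p = rCp (xor vo (xor s t)) mo p
    congr 1
    cases vo <;> cases t <;> cases s <;> rfl

lemma main_id : ∀ (R : List (ℕ × ℕ)) (b : Bool), valid R → vpos R →
    (∀ q ∈ R, podd q.1 = false → podd q.2 = false) → PSp b R →
    prs rOp b (pruns (rowR R)) = hval R b + prs (rCps b) false (pruns (colRuns R)) := by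
  intro R
  induction R with
  | nil =>
    intro b _ _ _ _
    simp [rowR, colRuns, pruns, prs, hval, topu, podd]
  | cons q R' ih =>
    obtain ⟨u, n⟩ := q
    intro b hval' hvp hD hS
    have htople : topu R' < u := by
      match R' with
      | [] => simpa [topu] using hvp (u,n) (by simp)
      | (w, m) :: R'' =>
        have := (List.pairwise_cons.mp hval'.1).1 (w, m) (by simp)
        simpa [topu] using this
    -- column side decomposition
    have hcr : colRuns ((u,n) :: R')
        = (colRuns R').map (fun q => (q.1 + n, q.2)) ++ [(n, u - topu R')] := rfl
    have hmos : mos (pruns ((colRuns R').map (fun q => (q.1 + n, q.2))))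
        = podd (topu R') := by
      rw [pruns_shift, mos_mapxor, mos_pruns, sum_colRuns R' (valid_tail hval')]
    have hcol : prs (rCps b) false (pruns (colRuns ((u,n) :: R')))
        = prs (rCps (xor b (podd n))) false (pruns (colRuns R'))
          + rCp (xor (podd n) b) (xor (podd u) (podd (topu R'))) (podd (topu R')) := by
      rw [hcr, pruns_append, prs_append, hmos]
      congr 1
      · rw [pruns_shift, prs_rCps_shift]
      · show rCps b (podd n) (podd (u - topu R')) (xor false (podd (topu R'))) + 0 = _
        rw [podd_sub (le_of_lt htople)]
        simp only [Bool.false_xor, Nat.add_zero]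
        show rCp (xor (podd n) b) _ _ = _
        rfl
    -- induction hypothesis
    have hPSp' : PSp (xor b (podd n)) R' := by
      intro q hq hx
      apply hS (q.1 + n, q.2)
      · rw [hcr]
        simp only [List.mem_append, List.mem_map]
        left
        exact ⟨q, hq, by simp⟩
      · show xor (podd (q.1 + n)) b = true
        rw [podd_add]
        rw [show xor (xor (podd q.1) (podd n)) b = xor (podd q.1) (xor b (podd n)) by
          cases podd q.1 <;> cases podd n <;> cases b <;> rfl]
        exact hx
    have hIH := ih (xor b (podd n)) (valid_tail hval')
      (fun x hx => hvp x (by simp [hx])) (fun x hx => hD x (by simp [hx])) hPSp'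
    -- the (S) condition for the head run
    have hS1 : xor b (podd n) = true → xor (podd u) (podd (topu R')) = false := by
      intro hb
      have hmem : (n, u - topu R') ∈ colRuns ((u,n) :: R') := by
        rw [hcr]; simp
      have := hS (n, u - topu R') hmem (by
        show xor (podd n) b = true
        rw [← hb]; cases podd n <;> cases b <;> rfl)
      simp only at this
      rw [podd_sub (le_of_lt htople)] at this
      exact this
    have hD1 : podd u = false → podd n = false := hD (u, n) (by simp)
    -- row side
    have hrow : rowR ((u,n) :: R')
        = if podd u = true then (u,n) :: rowR R' else rowR R' := by
      simp [rowR, List.filter_cons]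
    have hscal := scalar_id (podd u) (podd u) (podd (topu R')) (podd n) b hD1 hS1
    have hhv : hval ((u,n) :: R') b = if podd u = true ∧ b = false then 1 else 0 := rfl
    have hhv' : hval R' (xor b (podd n))
        = if podd (topu R') = true ∧ xor b (podd n) = false then 1 else 0 := rfl
    by_cases hu : podd u = true
    · rw [hrow, if_pos hu]
      have : pruns ((u,n) :: rowR R') = (podd u, podd n) :: pruns (rowR R') := rfl
      rw [this]
      show rOp (podd u) (podd n) b + prs rOp (xor b (podd n)) (pruns (rowR R')) = _
      rw [hIH, hcol, hhv, hhv']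
      rw [if_pos hu] at hscal
      omega
    · rw [hrow, if_neg hu]
      have hnu : podd n = false := hD1 (by simpa using hu)
      simp only [hnu, Bool.xor_false, Bool.false_xor] at hIH hcol hscal hhv'
      rw [hIH, hcol, hhv, hhv']
      rw [if_neg hu] at hscal
      omega




/-! ### step lemmas -/

lemma del_facts (r : ℕ → Bool → Bool → ℕ) {L L' : List ℕ} (a : ℕ) (l₁ l₂ : List ℕ)
    (hL : L = l₁ ++ a :: a :: l₂) (hL' : L' = l₁ ++ l₂)
    (hs : List.Pairwise (· ≥ ·) L) (h0 : r a false (podd l₁.length) = 0) :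
    Inv r none L = Inv r none L' ∧ List.Pairwise (· ≥ ·) L' ∧ L'.length + 2 = L.length := by
  subst hL hL'
  refine ⟨?_, ?_, by simp; omega⟩
  · apply inv_del r l₁ none a l₂ hs trivial
    simpa [nextP] using h0
  · have hsub : (l₁ ++ l₂).Sublist (l₁ ++ a :: a :: l₂) :=
      List.Sublist.append_left
        ((List.sublist_cons_self a l₂).trans (List.sublist_cons_self a (a :: l₂))) l₁
    exact hs.sublist hsub

lemma stepO_facts {L L' : List ℕ} (h : delStepO L L')
    (hs : List.Pairwise (· ≥ ·) L) (hev : Even L.length) :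
    Inv (rof rOp) none L = Inv (rof rOp) none L' ∧
      List.Pairwise (· ≥ ·) L' ∧ Even L'.length := by
  obtain ⟨a, l₁, l₂, hl₂, hL, hL'⟩ := h
  have hlen : L.length = l₁.length + 2 + l₂.length := by simp [hL]; omega
  have hpar : podd l₁.length = true := by
    have h1 := Nat.even_iff.mp hev
    have h2 := Nat.odd_iff.mp hl₂
    simp only [podd, decide_eq_true_eq]
    omega
  have h0 : rof rOp a false (podd l₁.length) = 0 := by rw [hpar]; rfl
  obtain ⟨h1, h2, h3⟩ := del_facts (rof rOp) a l₁ l₂ hL hL' hs h0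
  refine ⟨h1, h2, ?_⟩
  have := Nat.even_iff.mp hev
  apply Nat.even_iff.mpr
  omega

lemma stepE_facts {L L' : List ℕ} (h : delStepE L L')
    (hs : List.Pairwise (· ≥ ·) L) (hev : Even L.length) :
    Inv (rof rCp) none L = Inv (rof rCp) none L' ∧
      List.Pairwise (· ≥ ·) L' ∧ Even L'.length := by
  obtain ⟨a, l₁, l₂, hl₂, hL, hL'⟩ := h
  have hlen : L.length = l₁.length + 2 + l₂.length := by simp [hL]; omega
  have hpar : podd l₁.length = false := by
    have h1 := Nat.even_iff.mp hev
    have h2 := Nat.even_iff.mp hl₂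
    simp only [podd, decide_eq_false_iff_not]
    omega
  have h0 : rof rCp a false (podd l₁.length) = 0 := by rw [hpar]; rfl
  obtain ⟨h1, h2, h3⟩ := del_facts (rof rCp) a l₁ l₂ hL hL' hs h0
  refine ⟨h1, h2, ?_⟩
  have := Nat.even_iff.mp hev
  apply Nat.even_iff.mpr
  omega

lemma stepOOdd_facts {L L' : List ℕ} (h : delStepOOddVal L L')
    (hs : List.Pairwise (· ≥ ·) L) (hev : Even L.length) :
    Inv (rof rCp) none L = Inv (rof rCp) none L' ∧
      List.Pairwise (· ≥ ·) L' ∧ Even L'.length := by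
  obtain ⟨a, l₁, l₂, ha, hl₂, hL, hL'⟩ := h
  have hlen : L.length = l₁.length + 2 + l₂.length := by simp [hL]; omega
  have hpar : podd l₁.length = true := by
    have h1 := Nat.even_iff.mp hev
    have h2 := Nat.odd_iff.mp hl₂
    simp only [podd, decide_eq_true_eq]
    omega
  have hpa : podd a = true := by
    simp only [podd, decide_eq_true_eq]
    exact Nat.odd_iff.mp ha
  have h0 : rof rCp a false (podd l₁.length) = 0 := by
    rw [hpar]
    show rCp (podd a) false true = 0
    rw [hpa]
    rfl
  obtain ⟨h1, h2, h3⟩ := del_facts (rof rCp) a l₁ l₂ hL hL' hs h0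
  refine ⟨h1, h2, ?_⟩
  have := Nat.even_iff.mp hev
  apply Nat.even_iff.mpr
  omega

/-! ### normal form lengths -/

lemma len_nfO (M : List ℕ) (hev : Even M.length) (hnf : ∀ M', ¬ delStepO M M') :
    Inv (rof rOp) none M = M.length := by
  have hcond : ∀ (a : ℕ) (l₁ l₂ : List ℕ), ([] : List ℕ) ++ M = l₁ ++ a :: a :: l₂ →
      (podd l₁.length = false) := by
    intro a l₁ l₂ hdec
    simp only [List.nil_append] at hdec
    by_contra hc
    have hpar : l₁.length % 2 = 1 := by
      simp only [podd, decide_eq_false_iff_not] at hc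
      omega
    have hlen : M.length = l₁.length + 2 + l₂.length := by simp [hdec]; omega
    have hl₂ : Odd l₂.length := by
      have := Nat.even_iff.mp hev
      apply Nat.odd_iff.mpr
      omega
    exact hnf (l₁ ++ l₂) ⟨a, l₁, l₂, hl₂, hdec, rfl⟩
  have hpc : PCond (rof rOp) none M := by
    have := pcond_of (rof rOp) (fun a π => π = false)
      (fun v p hp => by rw [hp]; rfl) (fun v p => rfl)
      (fun v h1 h2 => by simp at h2) M [] hcond
    simpa [stf] using this
  have := nf_len (rof rOp) (fun v p => rfl) M none hpc
  simpa [emitR] using this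

lemma len_nfC (M : List ℕ) (hev : Even M.length)
    (hE : ∀ X, ¬ delStepE M X) (hO : ∀ X, ¬ delStepOOddVal M X) :
    Inv (rof rCp) none M = M.length := by
  have hcond : ∀ (a : ℕ) (l₁ l₂ : List ℕ), ([] : List ℕ) ++ M = l₁ ++ a :: a :: l₂ →
      (podd l₁.length = true ∧ a % 2 = 0) := by
    intro a l₁ l₂ hdec
    simp only [List.nil_append] at hdec
    have hlen : M.length = l₁.length + 2 + l₂.length := by simp [hdec]; omega
    have hevM := Nat.even_iff.mp hev
    have hpar : l₁.length % 2 = 1 := by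
      by_contra hc
      have hl₂ : Even l₂.length := by
        apply Nat.even_iff.mpr
        omega
      exact hE (l₁ ++ l₂) ⟨a, l₁, l₂, hl₂, hdec, rfl⟩
    constructor
    · simp only [podd, decide_eq_true_eq]; omega
    · by_contra hc
      have ha : Odd a := Nat.odd_iff.mpr (by omega)
      have hl₂ : Odd l₂.length := Nat.odd_iff.mpr (by omega)
      exact hO (l₁ ++ l₂) ⟨a, l₁, l₂, ha, hl₂, hdec, rfl⟩
  have hpc : PCond (rof rCp) none M := by
    have := pcond_of (rof rCp) (fun a π => π = true ∧ a % 2 = 0)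
      (fun v p hp => by
        obtain ⟨rfl, hv⟩ := hp
        show rCp (podd v) false true = 2
        have : podd v = false := by simp [podd]; omega
        rw [this]
        rfl)
      (fun v p => rfl)
      (fun v h1 h2 => by simp at h1) M [] hcond
    simpa [stf] using this
  have := nf_len (rof rCp) (fun v p => rfl) M none hpc
  simpa [emitR] using this

/-! ### E-normality is preserved by OOddVal steps -/

lemma enf_preserved {M M' : List ℕ} (hs : List.Pairwise (· ≥ ·) M)
    (hE : ∀ X, ¬ delStepE M X) (h : delStepOOddVal M M') :
    ∀ X, ¬ delStepE M' X := by
  obtain ⟨a, l₁, l₂, _, hodd2, hM, hM'⟩ := h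
  intro X hX
  obtain ⟨b, u, w, hwev, hM'eq, _⟩ := hX
  rw [hM'] at hM'eq
  rcases List.append_eq_append_iff.mp hM'eq with ⟨z, hu, hl₂⟩ | ⟨z, hl₁, hz⟩
  · -- redex entirely inside l₂
    refine hE ((l₁ ++ a :: a :: z) ++ w) ⟨b, l₁ ++ a :: a :: z, w, hwev, ?_, rfl⟩
    rw [hM, hl₂]
    simp
  · -- l₁ = u ++ z, b::b::w = z ++ l₂
    match z, hz with
    | [], hz =>
      -- l₂ = b::b::w
      simp only [List.nil_append] at hz
      refine hE ((l₁ ++ [a, a]) ++ w) ⟨b, l₁ ++ [a, a], w, hwev, ?_, rfl⟩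
      rw [hM, ← hz]
      simp
    | [c], hz =>
      -- straddle : l₁ = u ++ [b], l₂ = b :: w
      simp only [List.cons_append, List.nil_append, List.cons.injEq] at hz
      obtain ⟨rfl, htail⟩ := hz
      -- htail : b :: w = l₂ , hl₁ : l₁ = u ++ [b]
      have hsM := hs
      rw [hM, hl₁, ← htail] at hsM
      have hpa := List.pairwise_append.mp (by simpa using hsM :
        List.Pairwise (· ≥ ·) ((u ++ [b]) ++ a :: a :: b :: w))
      have h1 : b ≥ a := hpa.2.2 b (by simp) a (by simp)
      have h2 : a ≥ b := (List.pairwise_cons.mp hpa.2.1).1 b (by simp)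
      have hab : a = b := by omega
      refine hE ((u ++ [b, b]) ++ w) ⟨b, u ++ [b, b], w, hwev, ?_, rfl⟩
      rw [hM, hl₁, ← htail, hab]
      simp
    | c :: c' :: z', hz =>
      -- redex entirely inside l₁
      simp only [List.cons_append, List.cons.injEq] at hz
      obtain ⟨rfl, rfl, hz3⟩ := hz
      refine hE (u ++ (z' ++ a :: a :: l₂)) ⟨b, u, z' ++ a :: a :: l₂, ?_, ?_, rfl⟩
      · have : w.length = z'.length + l₂.length := by
          have := congrArg List.length hz3
          simpa using this
        have h2 := Nat.odd_iff.mp hodd2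
        have h3 := Nat.even_iff.mp hwev
        apply Nat.even_iff.mpr
        simp only [List.length_append, List.length_cons]
        omega
      · rw [hM, hl₁]
        simp



/-! ### misc small lemmas -/

lemma filter_unpack : ∀ R : List (ℕ × ℕ),
    (unpack R).filter (fun x => decide (Odd x)) = unpack (rowR R) := by
  intro R
  induction R with
  | nil => simp [unpack, rowR]
  | cons q R ih =>
    obtain ⟨u, n⟩ := q
    simp only [unpack, List.filter_append, List.filter_replicate, ih, rowR, List.filter_cons]
    by_cases hu : Odd u
    · rw [if_pos (by simpa using hu), if_pos (by simp [podd_eq_decide_odd, hu])]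
      simp [unpack, rowR]
    · rw [if_neg (by simpa using hu), if_neg (by simp [podd_eq_decide_odd, hu])]
      simp [rowR]

lemma rowR_valid (R : List (ℕ × ℕ)) (h : valid R) : valid (rowR R) :=
  ⟨h.1.filter _, fun q hq => h.2 q (List.mem_of_mem_filter hq)⟩

lemma prs_rOp_podd : ∀ (S : List (Bool × Bool)) (b : Bool), podd (prs rOp b S) = mos S := by
  intro S
  induction S with
  | nil => intro b; simp [prs, mos, podd]
  | cons q S ih =>
    obtain ⟨vo, mo⟩ := q
    intro b
    simp only [prs, mos, podd_add, ih]
    congr 1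
    cases mo <;> cases b <;> simp [rOp, podd]

lemma inv_rOp_pos : ∀ (t : List ℕ) (v : ℕ) (mp : Bool),
    1 ≤ Inv (rof rOp) (some (v, false, mp)) t := by
  intro t
  induction t with
  | nil =>
    intro v mp
    show 1 ≤ rof rOp v mp false
    cases mp <;> simp [rof, rOp]
  | cons x t ih =>
    intro v mp
    by_cases hxv : x = v
    · simp only [Inv, stepEm, stepSt, if_pos hxv]
      subst hxv
      have := ih x (!mp)
      omega
    · simp only [Inv, stepEm, stepSt, if_neg hxv]
      have h1 : 1 ≤ rof rOp v mp false := by cases mp <;> simp [rof, rOp]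
      omega

lemma filter_odd_length_parity : ∀ l : List ℕ,
    (l.filter (fun x => decide (Odd x))).length % 2 = l.sum % 2 := by
  intro l
  induction l with
  | nil => simp
  | cons x t ih =>
    rcases Nat.even_or_odd x with he | ho
    · rw [List.filter_cons, if_neg (by simpa using (Nat.not_odd_iff_even.mpr he))]
      have hx := Nat.even_iff.mp he
      simp only [List.sum_cons]
      omega
    · rw [List.filter_cons, if_pos (by simpa using ho)]
      have hx := Nat.odd_iff.mp ho
      simp only [List.length_cons, List.sum_cons]
      omega

/-! ### reflexive-transitive carrying -/

lemma rtg_carry (r : ℕ → Bool → Bool → ℕ) {rel : List ℕ → List ℕ → Prop}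
    (hstep : ∀ {L L' : List ℕ}, rel L L' → List.Pairwise (· ≥ ·) L → Even L.length →
      Inv r none L = Inv r none L' ∧ List.Pairwise (· ≥ ·) L' ∧ Even L'.length)
    {L M : List ℕ} (h : Relation.ReflTransGen rel L M)
    (hs : List.Pairwise (· ≥ ·) L) (hev : Even L.length) :
    Inv r none L = Inv r none M ∧ List.Pairwise (· ≥ ·) M ∧ Even M.length := by
  induction h with
  | refl => exact ⟨rfl, hs, hev⟩
  | tail hst hone ih =>
    obtain ⟨h1, h2, h3⟩ := ih
    obtain ⟨g1, g2, g3⟩ := hstep hone h2 h3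
    exact ⟨h1.trans g1, g2, g3⟩

lemma rtg_carry_enf {M₁ M₂ : List ℕ} (h : Relation.ReflTransGen delStepOOddVal M₁ M₂)
    (hs : List.Pairwise (· ≥ ·) M₁) (hev : Even M₁.length) (hE : ∀ X, ¬ delStepE M₁ X) :
    Inv (rof rCp) none M₁ = Inv (rof rCp) none M₂ ∧ List.Pairwise (· ≥ ·) M₂ ∧
    Even M₂.length ∧ (∀ X, ¬ delStepE M₂ X) := by
  induction h with
  | refl => exact ⟨rfl, hs, hev, hE⟩
  | tail hst hone ih =>
    obtain ⟨h1, h2, h3, h4⟩ := ih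
    obtain ⟨g1, g2, g3⟩ := stepOOdd_facts hone h2 h3
    exact ⟨h1.trans g1, g2, g3, enf_preserved h2 h4 hone⟩

/-! ### the theorem -/

theorem typeD_rows_eq_columns (n : ℕ) (l : List ℕ)
    (hpart : IsPartitionOf (2 * n) l)
    (hD : ∀ e ∈ l, Even e → Even (l.count e))
    (hspecial : ∀ e ∈ transposeList l, Odd e → Even ((transposeList l).count e))
    (hodd : ∃ x ∈ l, Odd x) :
    ∃ q : ℕ,
      (∀ M : List ℕ,
        Relation.ReflTransGen delStepO (l.filter (fun x => decide (Odd x))) M →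
        (∀ M', ¬ delStepO M M') → M.length = 2 * q + 2) ∧
      (∀ M₁ M₂ : List ℕ,
        Relation.ReflTransGen delStepE (padToEven (transposeList l)) M₁ →
        (∀ M', ¬ delStepE M₁ M') →
        Relation.ReflTransGen delStepOOddVal M₁ M₂ →
        (∀ M', ¬ delStepOOddVal M₂ M') → M₂.length = 2 * q + 2) := by
  obtain ⟨hsort, hpos, hsum⟩ := hpart
  set R := rle l with hRdef
  have hlR : l = unpack R := (unpack_rle l).symm
  have hvalR : valid R := valid_rle l hsort
  have hvposR : vpos R := by
    intro q hq
    exact hpos q.1 (by rw [hlR]; exact mem_unpack_of_mem R hvalR.2 q hq)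
  -- row side list
  set L₀ := l.filter (fun x => decide (Odd x)) with hL₀def
  have hL₀unpack : L₀ = unpack (rowR R) := by rw [hL₀def, hlR, filter_unpack]
  have hL₀sorted : List.Pairwise (· ≥ ·) L₀ := hsort.filter _
  have hL₀even : Even L₀.length := by
    apply Nat.even_iff.mpr
    rw [hL₀def, filter_odd_length_parity, hsum]
    omega
  have hrowvalid : valid (rowR R) := rowR_valid R hvalR
  -- hypotheses translations
  have hDrun : ∀ q ∈ R, podd q.1 = false → podd q.2 = false := by
    intro q hq hq1
    have hmem : q.1 ∈ l := by rw [hlR]; exact mem_unpack_of_mem R hvalR.2 q hq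
    have heven : Even q.1 := by
      apply Nat.even_iff.mpr
      simp only [podd, decide_eq_false_iff_not] at hq1
      omega
    have := hD q.1 hmem heven
    rw [hlR, count_unpack R hvalR q hq] at this
    simp only [podd, decide_eq_false_iff_not]
    have := Nat.even_iff.mp this
    omega
  have hcolvalid : valid (colRuns R) := colRuns_valid R hvalR hvposR
  have hcolvpos : vpos (colRuns R) := colRuns_vpos R hvalR hvposR
  have htrans : transposeList l = unpack (colRuns R) := by
    rw [hlR]; exact transpose_unpack R hvalR
  have hSrun : PSp false R := by
    intro q hq hx
    have hmem : q.1 ∈ transposeList l := by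
      rw [htrans]; exact mem_unpack_of_mem (colRuns R) hcolvalid.2 q hq
    have hoddq : Odd q.1 := by
      apply Nat.odd_iff.mpr
      simp only [Bool.xor_false, podd, decide_eq_true_eq] at hx
      omega
    have := hspecial q.1 hmem hoddq
    rw [htrans, count_unpack (colRuns R) hcolvalid q hq] at this
    simp only [podd, decide_eq_false_iff_not]
    have := Nat.even_iff.mp this
    omega
  -- the two invariants
  have hIrow : Inv (rof rOp) none L₀ = prs rOp false (pruns (rowR R)) := by
    rw [hL₀unpack]; exact machruns rOp (rowR R) hrowvalid
  -- column side padded list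
  have hlenT : (transposeList l).length = topu R := by
    rw [htrans, length_unpack, sum_colRuns R hvalR]
  set CR := colRuns R ++ (if podd (topu R) = true then [(0,1)] else []) with hCRdef
  have hCRvalid : valid CR := by
    constructor
    · rw [hCRdef, List.pairwise_append]
      refine ⟨hcolvalid.1, by split <;> simp, ?_⟩
      intro a ha b hb
      split at hb
      · simp only [List.mem_singleton] at hb
        subst hb
        exact hcolvpos a ha
      · simp at hb
    · intro q hq
      rw [hCRdef] at hq
      simp only [List.mem_append] at hq
      rcases hq with hq | hq
      · exact hcolvalid.2 q hq
      · split at hq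
        · simp only [List.mem_singleton] at hq; subst hq; simp
        · simp at hq
  have hpad : padToEven (transposeList l) = unpack CR := by
    rw [hCRdef, unpack_append, ← htrans, padToEven]
    by_cases hev : Even (transposeList l).length
    · rw [if_pos hev]
      have : podd (topu R) = false := by
        rw [← hlenT]
        simp only [podd, decide_eq_false_iff_not]
        have := Nat.even_iff.mp hev
        omega
      rw [this]
      simp [unpack]
    · rw [if_neg hev]
      have : podd (topu R) = true := by
        rw [← hlenT]
        simp only [podd, decide_eq_true_eq]
        have := Nat.odd_iff.mp (Nat.not_even_iff_odd.mp hev)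
        omega
      rw [this]
      simp [unpack]
  have hpadsorted : List.Pairwise (· ≥ ·) (padToEven (transposeList l)) := by
    rw [hpad]; exact sorted_unpack CR hCRvalid
  have hpadeven : Even (padToEven (transposeList l)).length := by
    rw [padToEven]
    by_cases hev : Even (transposeList l).length
    · rw [if_pos hev]; exact hev
    · rw [if_neg hev]
      simp only [List.length_append, List.length_cons, List.length_nil]
      have := Nat.odd_iff.mp (Nat.not_even_iff_odd.mp hev)
      apply Nat.even_iff.mpr
      omega
  have hIcol : Inv (rof rCp) none (padToEven (transposeList l))
      = prs rCp false (pruns CR) := by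
    rw [hpad]; exact machruns rCp CR hCRvalid
  -- relate the two invariants via main_id
  have hrCps0 : rCps false = rCp := by
    funext vo mo p
    simp [rCps]
  have hprsCR : prs rCp false (pruns CR)
      = prs rCp false (pruns (colRuns R)) + hval R false := by
    rw [hCRdef]
    by_cases ht : podd (topu R) = true
    · rw [if_pos ht]
      have : pruns (colRuns R ++ [(0,1)]) = pruns (colRuns R) ++ [(false, true)] := by
        simp [pruns, podd]
      rw [this, prs_append]
      simp only [prs]
      rw [hval, if_pos ⟨ht, rfl⟩]
      simp [rCp]
    · rw [if_neg ht]
      rw [hval, if_neg (by tauto)]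
      simp
  have hmainid := main_id R false hvalR hvposR hDrun hSrun
  rw [hrCps0] at hmainid
  have hIrowIcol : Inv (rof rOp) none L₀ = Inv (rof rCp) none (padToEven (transposeList l)) := by
    rw [hIrow, hIcol, hprsCR, hmainid]
    omega
  -- positivity and parity of the row invariant
  have hL₀ne : L₀ ≠ [] := by
    obtain ⟨x, hx, hox⟩ := hodd
    have : x ∈ L₀ := by
      rw [hL₀def]
      exact List.mem_filter.mpr ⟨hx, by simpa using hox⟩
    intro hnil
    rw [hnil] at this
    simp at this
  have hpos1 : 1 ≤ Inv (rof rOp) none L₀ := by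
    match hL₀ : L₀, hL₀ne with
    | y :: t, _ =>
      show 1 ≤ stepEm (rof rOp) none y + Inv (rof rOp) (stepSt none y) t
      simp only [stepEm, stepSt]
      have := inv_rOp_pos t y true
      omega
  have hparI : podd (Inv (rof rOp) none L₀) = false := by
    rw [hIrow, prs_rOp_podd, mos_pruns, ← length_unpack, ← hL₀unpack]
    simp only [podd, decide_eq_false_iff_not]
    have := Nat.even_iff.mp hL₀even
    omega
  have hIeven : Inv (rof rOp) none L₀ % 2 = 0 := by
    simp only [podd, decide_eq_false_iff_not] at hparI
    omega
  have hIge2 : 2 ≤ Inv (rof rOp) none L₀ := by omega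
  refine ⟨(Inv (rof rOp) none L₀ - 2) / 2, ?_, ?_⟩
  · intro M hrtg hnf
    obtain ⟨h1, h2, h3⟩ := rtg_carry (rof rOp) (fun h hs hev => stepO_facts h hs hev)
      hrtg hL₀sorted hL₀even
    rw [← len_nfO M h3 hnf, ← h1]
    omega
  · intro M₁ M₂ hrtg1 hnf1 hrtg2 hnf2
    obtain ⟨h1, h2, h3⟩ := rtg_carry (rof rCp) (fun h hs hev => stepE_facts h hs hev)
      hrtg1 hpadsorted hpadeven
    obtain ⟨g1, g2, g3, g4⟩ := rtg_carry_enf hrtg2 h2 h3 hnf1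
    rw [← len_nfC M₂ g3 g4 hnf2, ← g1, ← h1, ← hIrowIcol]
    omega


end TypeDAux

/-- Let `l` be a special type D partition of `2n` with at least one odd part.
Row procedure: delete all even entries from the list of parts, then repeatedly delete two
equal adjacent entries at positions `2t` and `2t-1` (`t ≥ 1`) until no such pair remains;
the remaining number of entries is `2q+2`.
Column procedure: take the padded column list (padded with zeros to even length);
repeatedly delete two equal adjacent entries at positions `2t+1` and `2t` until no such
pair remains; then repeatedly delete two equal adjacent entries of odd value at positions
`2t` and `2t-1` until no such pair remains; the remaining number of entries is `2q+2`.
Both counts are independent of all choices, with the same `q`. -/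
theorem typeD_LusztigQuotient_rows_eq_columns (n : ℕ) (l : List ℕ)
    (hpart : IsPartitionOf (2 * n) l)
    (hD : ∀ e ∈ l, Even e → Even (l.count e))
    (hspecial : ∀ e ∈ transposeList l, Odd e → Even ((transposeList l).count e))
    (hodd : ∃ x ∈ l, Odd x) :
    ∃ q : ℕ,
      (∀ M : List ℕ,
        Relation.ReflTransGen delStepO (l.filter (fun x => decide (Odd x))) M →
        (∀ M', ¬ delStepO M M') → M.length = 2 * q + 2) ∧
      (∀ M₁ M₂ : List ℕ,
        Relation.ReflTransGen delStepE (padToEven (transposeList l)) M₁ →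
        (∀ M', ¬ delStepE M₁ M') →
        Relation.ReflTransGen delStepOOddVal M₁ M₂ →
        (∀ M', ¬ delStepOOddVal M₂ M') → M₂.length = 2 * q + 2) :=
  TypeDAux.typeD_rows_eq_columns n l hpart hD hspecial hodd
end

section
/- Let q ≥ 0, let a_{2q+1} ≥ a_{2q} ≥ ⋯ ≥ a_1 ≥ 1 be odd integers, let I ⊆ {1,…,q} satisfy a_{2i} = a_{2i−1} for every i ∈ I, and let μ_1,…,μ_x and ν_1,…,ν_y be positive integers. Let P be the partition whose multiset of parts is {a_{2q+1}−1} ⊎ {a_{2i}, a_{2i−1} : i ∈ I} ⊎ {a_{2j}+1, a_{2j−1}−1 : j ∈ {1,…,q}∖I} ⊎ {μ_u, μ_u : 1 ≤ u ≤ x} ⊎ {ν_v, ν_v : 1 ≤ v ≤ y}, with zero entries discarded, and write |P| = 2n. Then the multiset of the n largest elements of H(P) equals {a_{2q+1}−2, a_{2q+1}−4, …, 3, 1} ⊎ (⊎_{i∈I} K_{a_{2i}}) ⊎ (⊎_{j∉I} T(a_{2j}, a_{2j−1})) ⊎ (⊎_u K_{μ_u}) ⊎ (⊎_v K_{ν_v}),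 where for odd integers a ≥ b ≥ 1 we set T(a,b) := {a, a−2, …, b+2, b} ⊎ {b−2, b−2, b−4, b−4, …, 3, 3, 1, 1}. (This is the computation at the heart of Theorem C for G = SO(2n+1,ℂ): the Dynkin element h^∨ of the dual orbit O^∨ ⊆ sp(2n,ℂ) attached by Sommers' canonical preimage to (O, C_I) coincides with the maximal term Ψ(O, π) of R(Õ^{C_I}), proving the Achar–Sommers conjecture in type B.) -/
/-- The multiset `K_j`: each of `j-1, j-3, …` down to `2` (if `j` is odd) or `1` (if `j`
is even) with multiplicity 2, together with a single `0` when `j` is odd. -/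
def Kmult (j : ℕ) : Multiset ℕ :=
  if Even j then 2 • (((List.range (j / 2)).map (fun i => 2 * i + 1) : List ℕ) : Multiset ℕ)
  else 2 • (((List.range (j / 2)).map (fun i => 2 * i + 2) : List ℕ) : Multiset ℕ) + {0}

/-- The arithmetic string `{r-1, r-3, …, 3-r, 1-r}` attached to a part `r`. -/
def hString (r : ℕ) : Multiset ℤ :=
  (((List.range r).map (fun t => (r : ℤ) - 1 - 2 * t) : List ℤ) : Multiset ℤ)

/-- `H(P)`: the multiset union over the parts `r` of `P` of the strings `{r-1, …, 1-r}`. -/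
def HofP (P : Multiset ℕ) : Multiset ℤ := P.bind hString

/-- The multiset of the `n` largest elements of `M`. -/
def topN (M : Multiset ℤ) (n : ℕ) : Multiset ℤ :=
  (((M.sort (· ≤ ·)).reverse.take n : List ℤ) : Multiset ℤ)

/-- The multiset `{m-2, m-4, …, 3, 1}` of odd numbers below an odd number `m`. -/
def oddsBelow (m : ℕ) : Multiset ℕ :=
  (((List.range (m / 2)).map (fun i => 2 * i + 1) : List ℕ) : Multiset ℕ)

/-- For odd `a ≥ b ≥ 1`, the multiset
`T(a,b) = {a, a-2, …, b+2, b} ⊎ {b-2, b-2, b-4, b-4, …, 3, 3, 1, 1}`. -/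
def Tmult (a b : ℕ) : Multiset ℕ :=
  (((List.range ((a - b) / 2 + 1)).map (fun i => b + 2 * i) : List ℕ) : Multiset ℕ)
    + 2 • oddsBelow b

/- ### normal form for hString -/

lemma hString_eq (r : ℕ) :
    hString r = ((List.range r).map (fun t : ℕ => (r:ℤ) - 1 - 2 * (t:ℤ)) : List ℤ) := by
  unfold hString
  congr 1
  rw [bind_pure_comp, List.map_eq_map, List.map_map]
  rfl

lemma hString_zero : hString 0 = 0 := rfl

lemma hString_one : hString 1 = {(0:ℤ)} := by
  rw [hString_eq, show (1:ℕ) = 0 + 1 from rfl, List.range_succ]; norm_num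

lemma hString_step (r : ℕ) :
    hString (r + 2) = hString r + ({((r:ℤ)+1), -((r:ℤ)+1)} : Multiset ℤ) := by
  rw [hString_eq, hString_eq]
  rw [show r + 2 = (r+1)+1 from rfl, List.range_succ_eq_map, List.range_succ]
  simp only [List.map_cons, List.map_map, List.map_append, List.map_nil]
  have h : (List.range r).map ((fun t : ℕ => (((r+1+1 : ℕ)):ℤ) - 1 - 2 * (t:ℤ)) ∘ Nat.succ)
      = (List.range r).map (fun t : ℕ => (r:ℤ) - 1 - 2 * (t:ℤ)) := by
    apply List.map_congr_left; intro t _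
    simp only [Function.comp_apply, Nat.succ_eq_add_one]; push_cast; ring
  rw [h]
  have h0 : (((r+1+1 : ℕ)):ℤ) - 1 - 2 * ((0:ℕ):ℤ) = (r:ℤ)+1 := by push_cast; ring
  have h1 : (((r+1+1 : ℕ)):ℤ) - 1 - 2 * (((Nat.succ r):ℕ):ℤ) = -((r:ℤ)+1) := by
    simp only [Nat.succ_eq_add_one]; push_cast; ring
  rw [h0, h1]
  show ((r:ℤ)+1) ::ₘ ((((List.range r).map (fun t : ℕ => (r:ℤ) - 1 - 2 * (t:ℤ)) : List ℤ) : Multiset ℤ)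
        + ({-((r:ℤ)+1)} : Multiset ℤ)) = _
  rw [show ({((r:ℤ)+1), -((r:ℤ)+1)} : Multiset ℤ) = ((r:ℤ)+1) ::ₘ {-((r:ℤ)+1)} from rfl,
      Multiset.add_cons]

/- ### steps for oddsBelow, Kmult, Tmult -/

lemma oddsBelow_one : oddsBelow 1 = 0 := rfl

lemma oddsBelow_step (k : ℕ) :
    oddsBelow (2*k+3) = oddsBelow (2*k+1) + {2*k+1} := by
  unfold oddsBelow
  rw [show (2*k+3)/2 = k+1 by omega, show (2*k+1)/2 = k by omega,
      List.range_succ, List.map_append, List.map_cons, List.map_nil]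
  rfl

lemma Kmult_even (k : ℕ) : Kmult (2*k) = 2 • oddsBelow (2*k+1) := by
  unfold Kmult oddsBelow
  rw [if_pos (even_two_mul k), show (2*k)/2 = k by omega, show (2*k+1)/2 = k by omega]

lemma Kmult_one : Kmult 1 = {0} := by
  unfold Kmult
  rw [if_neg (by decide)]
  simp

lemma Kmult_odd_step (k : ℕ) :
    Kmult (2*k+3) = Kmult (2*k+1) + {2*k+2, 2*k+2} := by
  unfold Kmult
  rw [if_neg (by simp [Nat.even_add_one, parity_simps]), if_neg (by simp [Nat.even_add_one, parity_simps]),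
      show (2*k+3)/2 = k+1 by omega, show (2*k+1)/2 = k by omega,
      List.range_succ, List.map_append, List.map_cons, List.map_nil]
  have : ((((List.range k).map (fun i => 2*i+2) ++ [2*k+2]) : List ℕ) : Multiset ℕ)
      = (((List.range k).map (fun i => 2*i+2) : List ℕ) : Multiset ℕ) + {2*k+2} := rfl
  rw [this, smul_add]
  rw [show ({2*k+2, 2*k+2} : Multiset ℕ) = 2 • ({2*k+2} : Multiset ℕ) from rfl]
  abel

lemma Tmult_base (m : ℕ) :
    Tmult (2*m+1) (2*m+1) = {2*m+1} + 2 • oddsBelow (2*m+1) := by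
  unfold Tmult
  rw [show (2*m+1 - (2*m+1))/2 + 1 = 1 by omega]
  rw [show List.range 1 = [0] from rfl]
  simp [Multiset.singleton_add]

lemma Tmult_step (m k : ℕ) :
    Tmult (2*m+1+2*(k+1)) (2*m+1) = Tmult (2*m+1+2*k) (2*m+1) + {2*m+1+2*(k+1)} := by
  unfold Tmult
  rw [show (2*m+1+2*(k+1) - (2*m+1))/2 + 1 = (k+1)+1 by omega,
      show (2*m+1+2*k - (2*m+1))/2 + 1 = k+1 by omega,
      List.range_succ, List.map_append, List.map_cons, List.map_nil]
  have : ((((List.range (k+1)).map (fun i => 2*m+1+2*i) ++ [2*m+1+2*(k+1)]) : List ℕ) : Multiset ℕ)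
      = (((List.range (k+1)).map (fun i => 2*m+1+2*i) : List ℕ) : Multiset ℕ) + {2*m+1+2*(k+1)} := rfl
  rw [this]
  abel

/- ### decompositions into positive and negative halves -/

noncomputable section
open scoped Classical

private def cpos : ℕ → ℤ := fun z => (z:ℤ)
private def cneg : ℕ → ℤ := fun z => -(z:ℤ)

lemma decomp_even (k : ℕ) :
    hString (2*k) = (oddsBelow (2*k+1)).map cpos + (oddsBelow (2*k+1)).map cneg := by
  induction k with
  | zero => rfl
  | succ k ih =>
      rw [show 2*(k+1) = 2*k+2 by ring, hString_step,
          show 2*k+2+1 = 2*k+3 by omega, oddsBelow_step,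
          Multiset.map_add, Multiset.map_add, ih]
      simp only [Multiset.map_singleton, cpos, cneg,
        show ∀ x y : ℤ, ({x, y} : Multiset ℤ) = {x} + {y} from fun x y => rfl]
      push_cast
      ring_nf
      abel

lemma decomp_double (j : ℕ) :
    hString j + hString j = (Kmult j).map cpos + (Kmult j).map cneg := by
  rcases Nat.even_or_odd j with ⟨k, hk⟩ | ⟨k, hk⟩
  · subst hk
    rw [show k + k = 2*k by ring, Kmult_even, decomp_even]
    rw [two_nsmul, Multiset.map_add, Multiset.map_add]
    abel
  · subst hk
    induction k with
    | zero =>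
        rw [show 2*0+1 = 1 from rfl, hString_one, Kmult_one]
        decide
    | succ k ih =>
        rw [show 2*(k+1)+1 = (2*k+1)+2 by ring, hString_step,
            show 2*k+1+2 = 2*k+3 by omega, Kmult_odd_step,
            Multiset.map_add, Multiset.map_add]
        have rearr : hString (2*k+1) + {((2*k+1:ℕ):ℤ)+1, -(((2*k+1:ℕ):ℤ)+1)}
              + (hString (2*k+1) + {((2*k+1:ℕ):ℤ)+1, -(((2*k+1:ℕ):ℤ)+1)})
            = (hString (2*k+1) + hString (2*k+1))
              + ({((2*k+1:ℕ):ℤ)+1, -(((2*k+1:ℕ):ℤ)+1)} + {((2*k+1:ℕ):ℤ)+1, -(((2*k+1:ℕ):ℤ)+1)}) := by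
          abel
        rw [rearr, ih]
        rw [show ({2*k+2, 2*k+2} : Multiset ℕ) = {2*k+2} + {2*k+2} from rfl]
        simp only [Multiset.map_add, Multiset.map_singleton, cpos, cneg,
          show ∀ x y : ℤ, ({x, y} : Multiset ℤ) = {x} + {y} from fun x y => rfl]
        push_cast
        ring_nf
        abel

lemma decomp_T (m k : ℕ) :
    hString (2*m+2+2*k) + hString (2*m)
      = (Tmult (2*m+1+2*k) (2*m+1)).map cpos + (Tmult (2*m+1+2*k) (2*m+1)).map cneg := by
  induction k with
  | zero =>
      rw [show 2*m+2+2*0 = 2*(m+1) by ring, show 2*m+1+2*0 = 2*m+1 by ring,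
          decomp_even, decomp_even, Tmult_base,
          show 2*(m+1)+1 = 2*m+3 by ring, oddsBelow_step]
      simp only [Multiset.map_add, Multiset.map_singleton, two_nsmul, cpos, cneg,
        show ∀ x y : ℤ, ({x, y} : Multiset ℤ) = {x} + {y} from fun x y => rfl]
      push_cast
      ring_nf
      abel
  | succ k ih =>
      rw [show 2*m+2+2*(k+1) = (2*m+2+2*k)+2 by ring, hString_step, Tmult_step,
          Multiset.map_add, Multiset.map_add, Multiset.map_singleton, Multiset.map_singleton]
      rw [add_right_comm, ih, show 2*m+1+2*(k+1) = 2*m+2+2*k+1 by ring]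
      simp only [Multiset.map_singleton, cpos, cneg,
        show ∀ x y : ℤ, ({x, y} : Multiset ℤ) = {x} + {y} from fun x y => rfl]
      push_cast
      abel

end

/- ### top-half extraction -/

lemma topN_eq (A B : Multiset ℤ) (h : ∀ y ∈ A, ∀ x ∈ B, y ≤ x) :
    topN (A + B) (Multiset.card B) = B := by
  unfold topN
  have hs : (A + B).sort (· ≤ ·) = A.sort (· ≤ ·) ++ B.sort (· ≤ ·) := by
    refine (fun hp h1 h2 => List.Perm.eq_of_pairwise' (r := (· ≤ ·)) h1 h2 hp) ?_ ?_ ?_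
    · apply Multiset.coe_eq_coe.mp
      rw [Multiset.sort_eq]
      change _ = (A.sort (· ≤ ·) : Multiset ℤ) + (B.sort (· ≤ ·) : Multiset ℤ)
      rw [Multiset.sort_eq, Multiset.sort_eq]
    · exact Multiset.pairwise_sort _ _
    · rw [List.pairwise_append]
      exact ⟨Multiset.pairwise_sort _ _, Multiset.pairwise_sort _ _,
        fun x hx y hy => h x ((Multiset.mem_sort _).mp hx) y ((Multiset.mem_sort _).mp hy)⟩
  rw [hs, List.reverse_append,
      List.take_left' (by rw [List.length_reverse, Multiset.length_sort])]
  rw [show ((((Multiset.sort B (fun x1 x2 => x1 ≤ x2)).reverse : List ℤ)) : Multiset ℤ)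
      = ((Multiset.sort B (fun x1 x2 => x1 ≤ x2) : List ℤ) : Multiset ℤ) from
    Multiset.coe_eq_coe.mpr (List.reverse_perm _), Multiset.sort_eq]

/- ### cardinalities and filtering -/

lemma card_hString (r : ℕ) : Multiset.card (hString r) = r := by
  rw [hString_eq]
  simp

lemma card_HofP (Q : Multiset ℕ) : Multiset.card (HofP Q) = Q.sum := by
  unfold HofP
  rw [Multiset.card_bind]
  have : Multiset.map (Multiset.card ∘ hString) Q = Multiset.map id Q :=
    Multiset.map_congr rfl (fun r _ => by simp [card_hString])
  rw [this, Multiset.map_id]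

lemma bind_filter_pos (Q : Multiset ℕ) :
    (Q.filter (fun z => 0 < z)).bind hString = Q.bind hString := by
  conv_rhs => rw [← Multiset.filter_add_not (fun z => 0 < z) Q]
  rw [Multiset.add_bind]
  have h0 : (Q.filter (fun z => ¬ 0 < z)).bind hString
      = (Q.filter (fun z => ¬ 0 < z)).bind (fun _ => 0) := by
    apply Multiset.bind_congr
    intro x hx
    have : x = 0 := by
      have := (Multiset.mem_filter.mp hx).2
      omega
    rw [this]; rfl
  rw [h0]
  simp

/-- Achar–Sommers conjecture, type B computation: for odd `a_{2q+1} ≥ ⋯ ≥ a_1 ≥ 1`,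
`I ⊆ {1,…,q}` with `a_{2i} = a_{2i-1}` for `i ∈ I`, and positive integers `μ_u`, `ν_v`,
let `P` be the partition with parts
`{a_{2q+1}-1} ⊎ {a_{2i}, a_{2i-1} : i ∈ I} ⊎ {a_{2j}+1, a_{2j-1}-1 : j ∉ I} ⊎ {μ_u, μ_u} ⊎ {ν_v, ν_v}`
(zero entries discarded), `|P| = 2n`.  Then the `n` largest elements of `H(P)` form the
multiset `{a_{2q+1}-2, …, 3, 1} ⊎ (⊎_{i∈I} K_{a_{2i}}) ⊎ (⊎_{j∉I} T(a_{2j}, a_{2j-1}))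
⊎ (⊎_u K_{μ_u}) ⊎ (⊎_v K_{ν_v})`. -/
theorem acharSommers_typeB (q : ℕ) (a : ℕ → ℕ) (I : Finset ℕ) (μ ν : List ℕ)
    (ha_odd : ∀ i, 1 ≤ i → i ≤ 2 * q + 1 → Odd (a i))
    (ha_mono : ∀ i, 1 ≤ i → i < 2 * q + 1 → a i ≤ a (i + 1))
    (ha_ge : 1 ≤ a 1)
    (hI : I ⊆ Finset.Icc 1 q)
    (hIa : ∀ i ∈ I, a (2 * i) = a (2 * i - 1))
    (hμ : ∀ m ∈ μ, 0 < m) (hν : ∀ m ∈ ν, 0 < m)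
    (P : Multiset ℕ)
    (hP : P = (({a (2 * q + 1) - 1} : Multiset ℕ)
        + I.val.bind (fun i => ({a (2 * i), a (2 * i - 1)} : Multiset ℕ))
        + ((Finset.Icc 1 q) \ I).val.bind
            (fun j => ({a (2 * j) + 1, a (2 * j - 1) - 1} : Multiset ℕ))
        + 2 • (μ : Multiset ℕ) + 2 • (ν : Multiset ℕ)).filter (fun z => 0 < z)) :
    topN (HofP P) (P.sum / 2)
      = (oddsBelow (a (2 * q + 1))
          + I.val.bind (fun i => Kmult (a (2 * i)))
          + ((Finset.Icc 1 q) \ I).val.bind (fun j => Tmult (a (2 * j)) (a (2 * j - 1)))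
          + (μ : Multiset ℕ).bind Kmult
          + (ν : Multiset ℕ).bind Kmult).map (fun z => (z : ℤ)) := by
  classical
  set S : Multiset ℕ := oddsBelow (a (2 * q + 1))
      + I.val.bind (fun i => Kmult (a (2 * i)))
      + ((Finset.Icc 1 q) \ I).val.bind (fun j => Tmult (a (2 * j)) (a (2 * j - 1)))
      + (μ : Multiset ℕ).bind Kmult
      + (ν : Multiset ℕ).bind Kmult with hS
  -- the key decomposition of H(P)
  have key : HofP P = S.map cpos + S.map cneg := by
    rw [hP]
    unfold HofP
    rw [bind_filter_pos, Multiset.add_bind, Multiset.add_bind, Multiset.add_bind,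
        Multiset.add_bind]
    -- piece 1
    obtain ⟨m1, hm1⟩ := ha_odd (2*q+1) (by omega) (by omega)
    have p1 : ({a (2*q+1) - 1} : Multiset ℕ).bind hString
        = (oddsBelow (a (2*q+1))).map cpos + (oddsBelow (a (2*q+1))).map cneg := by
      rw [Multiset.singleton_bind, hm1, show 2*m1+1-1 = 2*m1 by omega, decomp_even]
    -- piece 2
    have p2 : (I.val.bind (fun i => ({a (2*i), a (2*i-1)} : Multiset ℕ))).bind hString
        = (I.val.bind (fun i => Kmult (a (2*i)))).map cpos
          + (I.val.bind (fun i => Kmult (a (2*i)))).map cneg := by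
      rw [Multiset.bind_assoc]
      have step : ∀ i ∈ I.val, ({a (2*i), a (2*i-1)} : Multiset ℕ).bind hString
          = (Kmult (a (2*i))).map cpos + (Kmult (a (2*i))).map cneg := by
        intro i hi
        have hi' : i ∈ I := hi
        rw [show ({a (2*i), a (2*i-1)} : Multiset ℕ).bind hString
            = hString (a (2*i)) + hString (a (2*i-1)) by simp]
        rw [← hIa i hi', decomp_double]
      rw [Multiset.bind_congr step, Multiset.bind_add, ← Multiset.map_bind, ← Multiset.map_bind]
    -- piece 3
    have p3 : (((Finset.Icc 1 q) \ I).val.bind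
          (fun j => ({a (2*j) + 1, a (2*j-1) - 1} : Multiset ℕ))).bind hString
        = (((Finset.Icc 1 q) \ I).val.bind (fun j => Tmult (a (2*j)) (a (2*j-1)))).map cpos
          + (((Finset.Icc 1 q) \ I).val.bind (fun j => Tmult (a (2*j)) (a (2*j-1)))).map cneg := by
      rw [Multiset.bind_assoc]
      have step : ∀ j ∈ ((Finset.Icc 1 q) \ I).val,
          ({a (2*j) + 1, a (2*j-1) - 1} : Multiset ℕ).bind hString
          = (Tmult (a (2*j)) (a (2*j-1))).map cpos + (Tmult (a (2*j)) (a (2*j-1))).map cneg := by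
        intro j hj
        have hj' : j ∈ (Finset.Icc 1 q) \ I := hj
        have hjq : 1 ≤ j ∧ j ≤ q := Finset.mem_Icc.mp (Finset.mem_sdiff.mp hj').1
        obtain ⟨m, hm⟩ := ha_odd (2*j-1) (by omega) (by omega)
        obtain ⟨t, ht⟩ := ha_odd (2*j) (by omega) (by omega)
        have hmon : a (2*j-1) ≤ a (2*j) := by
          have h' := ha_mono (2*j-1) (by omega) (by omega)
          rwa [show 2*j-1+1 = 2*j by omega] at h'
        obtain ⟨k, hk⟩ : ∃ k, a (2*j) = 2*m+1+2*k := ⟨t - m, by omega⟩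
        rw [show ({a (2*j)+1, a (2*j-1)-1} : Multiset ℕ).bind hString
            = hString (a (2*j)+1) + hString (a (2*j-1)-1) by simp]
        rw [hm, hk, show 2*m+1+2*k+1 = 2*m+2+2*k by omega, show 2*m+1-1 = 2*m by omega,
            decomp_T]
      rw [Multiset.bind_congr step, Multiset.bind_add, ← Multiset.map_bind, ← Multiset.map_bind]
    -- pieces 4 and 5
    have p45 : ∀ L : List ℕ, (2 • (L : Multiset ℕ)).bind hString
        = ((L : Multiset ℕ).bind Kmult).map cpos + ((L : Multiset ℕ).bind Kmult).map cneg := by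
      intro L
      rw [two_nsmul, Multiset.add_bind, ← Multiset.bind_add]
      have step : ∀ m ∈ (L : Multiset ℕ), hString m + hString m
          = (Kmult m).map cpos + (Kmult m).map cneg := fun m _ => decomp_double m
      rw [Multiset.bind_congr step, Multiset.bind_add, ← Multiset.map_bind, ← Multiset.map_bind]
    rw [p1, p2, p3, p45 μ, p45 ν, hS]
    simp only [Multiset.map_add]
    abel
  -- cardinality bookkeeping
  have hcard : P.sum / 2 = Multiset.card (S.map cpos) := by
    have h1 := card_HofP P
    rw [key] at h1
    rw [Multiset.card_add, Multiset.card_map, Multiset.card_map] at h1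
    rw [Multiset.card_map]
    omega
  -- the comparison hypothesis
  have hcomp : ∀ y ∈ S.map cneg, ∀ x ∈ S.map cpos, y ≤ x := by
    intro y hy x hx
    obtain ⟨u, _, hu⟩ := Multiset.mem_map.mp hy
    obtain ⟨v, _, hv⟩ := Multiset.mem_map.mp hx
    rw [← hu, ← hv]
    unfold cpos cneg
    have : (0:ℤ) ≤ (v:ℤ) := Int.ofNat_nonneg v
    have : -(u:ℤ) ≤ 0 := by omega
    omega
  rw [key, add_comm (S.map cpos) (S.map cneg), hcard, topN_eq _ _ hcomp]
  rw [bind_pure_comp]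
  show Multiset.map cpos S = Multiset.map (fun z : ℤ => z) (Multiset.map (fun a : ℕ => (a:ℤ)) S)
  rw [Multiset.map_map]
  rfl
end

section
/- Let q ≥ 0, let a_{2q} ≥ a_{2q−1} ≥ ⋯ ≥ a_1 ≥ 2 be even integers, let a_0 be an even integer with a_1 ≥ a_0 ≥ 0, let I ⊆ {1,…,q}, and let μ_1,…,μ_x and ν_1,…,ν_y be positive integers. Consider the multiset M := {a_{2i}, a_{2i−1} : i ∈ I} ⊎ {a_{2j}+1, a_{2j−1}−1 : j ∈ {1,…,q}∖I} ⊎ {a_0+1} ⊎ {μ_u, μ_u : 1 ≤ u ≤ x} ⊎ {ν_v, ν_v : 1 ≤ v ≤ y}. Then every even element of M occurs in M with even multiplicity — i.e. M is the partition of a nilpotent orbit of so(2n+1,ℂ), where 2n+1 is the sum of the elements of M — if and only if a_{2i} = a_{2i−1} for every i ∈ I. (This is the assertion in Lemma 4.2, type C case, that the displayed candidate partition for Sommers' canonical preimage defines a nilpotent orbit in the Langlands dual Lie algebra so(2n+1,ℂ) precisely when a_{2i} = a_{2i−1} for all i ∈ I.) -/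
/-- Lemma 4.2 of the paper, type C case: for even `a_{2q} ≥ ⋯ ≥ a_1 ≥ 2`, even `a_0` with
`a_1 ≥ a_0 ≥ 0`, `I ⊆ {1,…,q}`, and positive integers `μ_u`, `ν_v`, the multiset
`M = {a_{2i}, a_{2i-1} : i ∈ I} ⊎ {a_{2j}+1, a_{2j-1}-1 : j ∉ I} ⊎ {a_0+1}
⊎ {μ_u, μ_u} ⊎ {ν_v, ν_v}`
has every even element occurring with even multiplicity — i.e. `M` is the partition of a
nilpotent orbit of `so(2n+1,ℂ)` where `2n+1` is the sum of its elements — if and only if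
`a_{2i} = a_{2i-1}` for every `i ∈ I`. -/
theorem canonicalPreimage_typeC_partition_iff (q : ℕ) (a : ℕ → ℕ) (I : Finset ℕ)
    (μ ν : List ℕ)
    (ha_even : ∀ i, i ≤ 2 * q → Even (a i))
    (ha_mono : ∀ i, i < 2 * q → a i ≤ a (i + 1))
    (ha_ge : ∀ i, 1 ≤ i → i ≤ 2 * q → 2 ≤ a i)
    (hI : I ⊆ Finset.Icc 1 q)
    (hμ : ∀ m ∈ μ, 0 < m) (hν : ∀ m ∈ ν, 0 < m)
    (M : Multiset ℕ)
    (hM : M = I.val.bind (fun i => ({a (2 * i), a (2 * i - 1)} : Multiset ℕ))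
        + ((Finset.Icc 1 q) \ I).val.bind
            (fun j => ({a (2 * j) + 1, a (2 * j - 1) - 1} : Multiset ℕ))
        + ({a 0 + 1} : Multiset ℕ)
        + 2 • (μ : Multiset ℕ) + 2 • (ν : Multiset ℕ)) :
    (∀ e ∈ M, Even e → Even (M.count e)) ↔ (∀ i ∈ I, a (2 * i) = a (2 * i - 1)) := by
  -- monotonicity over the whole range
  have hmono : ∀ m n, m ≤ n → n ≤ 2 * q → a m ≤ a n := by
    intro m n
    induction n with
    | zero =>
      intro hmn _
      have : m = 0 := by omega
      simp [this]
    | succ k ih =>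
      intro hmn hn
      rcases Nat.eq_or_lt_of_le hmn with h | h
      · exact h ▸ le_refl _
      · exact le_trans (ih (by omega) (by omega)) (ha_mono k (by omega))
  -- counting for a generic even e in the big sum
  have key : ∀ e : ℕ, Even e → M.count e =
      (∑ j ∈ I, Multiset.count e ({a (2 * j), a (2 * j - 1)} : Multiset ℕ))
      + 2 * (Multiset.count e (μ : Multiset ℕ) + Multiset.count e (ν : Multiset ℕ)) := by
    intro e he
    have he2 : e % 2 = 0 := Nat.even_iff.mp he
    rw [hM]
    simp only [Multiset.count_add, Multiset.count_bind, Multiset.count_nsmul,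
      Multiset.count_singleton]
    have hB : (Multiset.map
        (fun j => Multiset.count e ({a (2 * j) + 1, a (2 * j - 1) - 1} : Multiset ℕ))
        ((Finset.Icc 1 q) \ I).val).sum = 0 := by
      rw [Multiset.sum_eq_zero]
      intro x hx
      rw [Multiset.mem_map] at hx
      obtain ⟨j, hj, rfl⟩ := hx
      have hj' : j ∈ Finset.Icc 1 q := Finset.mem_sdiff.mp (by exact hj) |>.1
      rw [Finset.mem_Icc] at hj'
      have h1 : Even (a (2 * j)) := ha_even _ (by omega)
      have h2 : Even (a (2 * j - 1)) := ha_even _ (by omega)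
      have h3 : 2 ≤ a (2 * j - 1) := ha_ge _ (by omega) (by omega)
      rw [Nat.even_iff] at h1 h2
      simp only [Multiset.insert_eq_cons, Multiset.count_cons, Multiset.count_singleton]
      have : e ≠ a (2 * j) + 1 := by omega
      have : e ≠ a (2 * j - 1) - 1 := by omega
      simp_all
    have hC : Even (a 0) := ha_even 0 (by omega)
    rw [Nat.even_iff] at hC
    have hC' : (if e = a 0 + 1 then 1 else 0) = 0 := by
      have : e ≠ a 0 + 1 := by omega
      simp [this]
    rw [hB, hC']
    have : (Multiset.map
        (fun i => Multiset.count e ({a (2 * i), a (2 * i - 1)} : Multiset ℕ)) I.val).sum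
        = ∑ j ∈ I, Multiset.count e ({a (2 * j), a (2 * j - 1)} : Multiset ℕ) := rfl
    rw [this]
    ring
  constructor
  · -- forward direction
    intro h
    by_contra hcon
    push_neg at hcon
    obtain ⟨i₀, hi₀I, hi₀ne⟩ := hcon
    set S := I.filter (fun j => a (2 * j - 1) < a (2 * j)) with hS
    have hle : ∀ j ∈ I, a (2 * j - 1) ≤ a (2 * j) := by
      intro j hj
      have hj' := Finset.mem_Icc.mp (hI hj)
      have := ha_mono (2 * j - 1) (by omega)
      have h2 : 2 * j - 1 + 1 = 2 * j := by omega
      rw [h2] at this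
      exact this
    have hi₀S : i₀ ∈ S := by
      refine Finset.mem_filter.mpr ⟨hi₀I, ?_⟩
      have := hle i₀ hi₀I
      omega
    have hSne : S.Nonempty := ⟨i₀, hi₀S⟩
    set m := S.max' hSne with hm
    have hmS : m ∈ S := S.max'_mem hSne
    have hmax : ∀ j ∈ S, j ≤ m := fun j hj => S.le_max' j hj
    have hmI : m ∈ I := (Finset.mem_filter.mp hmS).1
    have hmlt : a (2 * m - 1) < a (2 * m) := by
      have := (Finset.mem_filter.mp hmS).2
      simpa using this
    have hm' := Finset.mem_Icc.mp (hI hmI)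
    set v := a (2 * m) with hv
    have hvev : Even v := ha_even _ (by omega)
    -- count of v in the pair sum is odd
    have hsum : (∑ j ∈ I, Multiset.count v ({a (2 * j), a (2 * j - 1)} : Multiset ℕ))
        = Multiset.count v ({a (2 * m), a (2 * m - 1)} : Multiset ℕ)
          + ∑ j ∈ I.erase m, Multiset.count v ({a (2 * j), a (2 * j - 1)} : Multiset ℕ) :=
      (Finset.add_sum_erase I _ hmI).symm
    have hterm : Multiset.count v ({a (2 * m), a (2 * m - 1)} : Multiset ℕ) = 1 := by
      simp only [Multiset.insert_eq_cons, Multiset.count_cons, Multiset.count_singleton]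
      have h1 : v = a (2 * m) := rfl
      have h2 : v ≠ a (2 * m - 1) := by omega
      simp [h1, h2]
      omega
    have hrest : Even (∑ j ∈ I.erase m,
        Multiset.count v ({a (2 * j), a (2 * j - 1)} : Multiset ℕ)) := by
      refine Finset.even_sum _ fun j hj => ?_
      have hjI : j ∈ I := Finset.mem_of_mem_erase hj
      have hjne : j ≠ m := Finset.ne_of_mem_erase hj
      have hj' := Finset.mem_Icc.mp (hI hjI)
      rcases Nat.lt_or_ge (a (2 * j - 1)) (a (2 * j)) with hlt | hge
      · -- j ∈ S, so j < m, so both entries are < v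
        have hjS : j ∈ S := Finset.mem_filter.mpr ⟨hjI, by simpa using hlt⟩
        have hjm : j < m := lt_of_le_of_ne (hmax j hjS) hjne
        have hb : a (2 * j) ≤ a (2 * m - 1) := hmono _ _ (by omega) (by omega)
        simp only [Multiset.insert_eq_cons, Multiset.count_cons, Multiset.count_singleton]
        have h1 : v ≠ a (2 * j) := by omega
        have h2 : v ≠ a (2 * j - 1) := by omega
        simp [h1, h2]
      · -- equal pair: count is 0 or 2
        have heq : a (2 * j) = a (2 * j - 1) := le_antisymm hge (hle j hjI)
        simp only [Multiset.insert_eq_cons, Multiset.count_cons, Multiset.count_singleton, heq]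
        by_cases hvv : v = a (2 * j - 1) <;> simp [hvv]
    have hMc := key v hvev
    have hvM : v ∈ M := by
      rw [← Multiset.count_pos, hMc, hsum, hterm]
      omega
    have := h v hvM hvev
    rw [hMc, hsum, hterm, Nat.even_iff] at this
    rw [Nat.even_iff] at hrest
    omega
  · -- reverse direction
    intro h e heM hee
    rw [key e hee]
    have : Even (∑ j ∈ I, Multiset.count e ({a (2 * j), a (2 * j - 1)} : Multiset ℕ)) := by
      refine Finset.even_sum _ fun j hj => ?_
      have heq := h j hj
      simp only [Multiset.insert_eq_cons, Multiset.count_cons, Multiset.count_singleton, heq]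
      by_cases hvv : e = a (2 * j - 1) <;> simp [hvv]
    rw [Nat.even_iff] at this ⊢
    omega
end

section
/- Let λ be a special type C partition of 2n. Take the padded column list of λ (padded with zeros to odd length); repeatedly delete two equal adjacent entries occupying positions 2t+1 and 2t until no such pair remains; then repeatedly delete two equal adjacent entries of odd value occupying positions 2t and 2t−1 until no such pair remains. Then every entry of the resulting list is even. (This is the assertion, implicit in Propositions 2.4 and 3.2 of the paper, that the reduced column string a''_{2q} ≥ a''_{2q−1} ≥ ⋯ ≥ a''_0 of a special orbit of Sp(2n,ℂ), obtained after separating the ν column pairs and the odd μ column pairs, consists entirely of even numbers.) -/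
def GoodInv (L : List ℕ) : Prop :=
  L.Pairwise (· ≥ ·) ∧ (∀ v, Odd v → Even (L.count v))

def NoE (L : List ℕ) : Prop :=
  ∀ (a : ℕ) (l₁ l₂ : List ℕ), L = l₁ ++ a :: a :: l₂ → Odd l₂.length

lemma count_del (v a : ℕ) (l₁ l₂ : List ℕ) :
    (l₁ ++ a :: a :: l₂).count v = (l₁ ++ l₂).count v + if v = a then 2 else 0 := by
  by_cases h : v = a
  · subst h; simp [List.count_append, List.count_cons] <;> omega
  · simp [List.count_append, List.count_cons, h, Ne.symm h] <;> omega

lemma goodInv_del {a : ℕ} {l₁ l₂ : List ℕ} (h : GoodInv (l₁ ++ a :: a :: l₂)) :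
    GoodInv (l₁ ++ l₂) := by
  obtain ⟨hs, hc⟩ := h
  refine ⟨hs.sublist (List.Sublist.append_left
    ((l₂.sublist_cons_self a).trans ((a :: l₂).sublist_cons_self a)) l₁), fun v hv => ?_⟩
  have := hc v hv
  rw [count_del] at this
  rw [Nat.even_iff] at this ⊢
  split at this <;> omega

lemma exists_adj_pair : ∀ (L : List ℕ), L.Pairwise (· ≥ ·) → ∀ x : ℕ, 2 ≤ L.count x →
    ∃ l₁ l₂ : List ℕ, L = l₁ ++ x :: x :: l₂ := by
  intro L
  induction L with
  | nil => intro _ x h; simp at h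
  | cons y ys ih =>
    intro hs x h
    have hcc : List.count x (y :: ys) = List.count x ys + if y = x then 1 else 0 := by
      simp [List.count_cons]
    rcases Nat.lt_or_ge (ys.count x) 2 with hlt | hge
    · have hy : x = y := by
        by_contra hne
        rw [hcc, if_neg (fun hh => hne hh.symm)] at h
        omega
      subst hy
      have h1 : 1 ≤ ys.count x := by
        rw [hcc, if_pos rfl] at h; omega
      have hmem : x ∈ ys := List.count_pos_iff.mp (by omega)
      cases ys with
      | nil => simp at hmem
      | cons z zs =>
        have hsz := List.pairwise_cons.mp hs
        have hyz : x ≥ z := hsz.1 z List.mem_cons_self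
        have hzy : x ≤ z := by
          rcases List.mem_cons.mp hmem with h' | h'
          · exact h'.le
          · exact (List.pairwise_cons.mp hsz.2).1 x h'
        have hzeq : z = x := le_antisymm hyz hzy
        exact ⟨[], zs, by simp [hzeq]⟩
    · obtain ⟨l₁, l₂, heq⟩ := ih (List.pairwise_cons.mp hs).2 x hge
      exact ⟨y :: l₁, l₂, by simp [heq]⟩

lemma noE_of_O {L L' : List ℕ} (h : delStepOOddVal L L') (hs : L.Pairwise (· ≥ ·))
    (hn : NoE L) : NoE L' := by
  obtain ⟨a, l₁, l₂, _, hl2, rfl, rfl⟩ := h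
  intro b p q hpq
  rcases List.append_eq_append_iff.mp hpq with ⟨r, hr1, hr2⟩ | ⟨r, hr1, hr2⟩
  · -- p = l₁ ++ r, l₂ = r ++ b::b::q
    exact hn b (l₁ ++ a :: a :: r) q (by simp [hr2])
  · -- l₁ = p ++ r, b::b::q = r ++ l₂
    rcases r with _ | ⟨c, _ | ⟨d, r'⟩⟩
    · simp only [List.nil_append] at hr2
      exact hn b (l₁ ++ [a, a]) q (by simp [hr1, ← hr2])
    · simp only [List.singleton_append, List.cons_eq_cons] at hr2
      obtain ⟨hc, hl2eq⟩ := hr2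
      subst hc
      have hLeq : l₁ ++ a :: a :: l₂ = p ++ b :: a :: a :: b :: q := by
        simp [hr1, ← hl2eq]
      have hs2 : (b :: a :: a :: b :: q).Pairwise (· ≥ ·) := by
        rw [hLeq] at hs
        exact hs.sublist (List.sublist_append_right p _)
      have hba : b ≥ a := (List.pairwise_cons.mp hs2).1 a (by simp)
      have hab : a ≥ b :=
        (List.pairwise_cons.mp (List.pairwise_cons.mp hs2).2).1 b (by simp)
      have hab2 : a = b := le_antisymm hba hab
      subst hab2
      have h2 := hn a p (a :: a :: q) (by rw [hLeq])
      rw [← hl2eq] at hl2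
      simp only [List.length_cons] at h2 hl2
      rw [Nat.odd_iff] at h2 hl2
      omega
    · simp only [List.cons_append, List.cons_eq_cons] at hr2
      obtain ⟨hc, hd, hq⟩ := hr2
      subst hc; subst hd
      have h2 := hn b p (r' ++ a :: a :: l₂) (by simp [hr1])
      rw [hq]
      simp only [List.length_append, List.length_cons] at h2 ⊢
      rw [Nat.odd_iff] at h2 hl2 ⊢
      omega

lemma goodInv_rtE {L M : List ℕ} (h : Relation.ReflTransGen delStepE L M)
    (hG : GoodInv L) : GoodInv M := by
  induction h with
  | refl => exact hG
  | tail _ hstep ih =>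
    obtain ⟨a, l₁, l₂, _, rfl, rfl⟩ := hstep
    exact goodInv_del ih

lemma inv_rtO {L M : List ℕ} (h : Relation.ReflTransGen delStepOOddVal L M)
    (hG : GoodInv L) (hN : NoE L) : GoodInv M ∧ NoE M := by
  induction h with
  | refl => exact ⟨hG, hN⟩
  | tail _ hstep ih =>
    obtain ⟨hG', hN'⟩ := ih
    refine ⟨?_, noE_of_O hstep hG'.1 hN'⟩
    obtain ⟨a, l₁, l₂, _, _, rfl, rfl⟩ := hstep
    exact goodInv_del hG'

lemma goodInv_init (l : List ℕ)
    (hspecial : ∀ e ∈ transposeList l, Odd e → Even ((transposeList l).count e)) :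
    GoodInv (padToOdd (transposeList l)) := by
  have hsorted : (transposeList l).Pairwise (· ≥ ·) := by
    unfold transposeList
    rw [List.pairwise_map]
    refine List.Pairwise.imp ?_ List.pairwise_lt_range
    intro i j hij
    exact List.countP_mono_left fun x _ hx => by
      simp only [decide_eq_true_eq] at hx ⊢; omega
  constructor
  · unfold padToOdd
    split
    · exact hsorted
    · rw [List.pairwise_append]
      exact ⟨hsorted, List.pairwise_singleton _ _, fun x _ y hy => by
        simp at hy; omega⟩
  · intro v hv
    have hv0 : v ≠ 0 := by rintro rfl; simp [Nat.odd_iff] at hv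
    have hcount : (padToOdd (transposeList l)).count v = (transposeList l).count v := by
      unfold padToOdd
      split
      · rfl
      · simp [List.count_append, List.count_singleton, hv0, Ne.symm hv0]
    rw [hcount]
    by_cases hmem : v ∈ transposeList l
    · exact hspecial v hmem hv
    · simp [List.count_eq_zero_of_not_mem hmem]


/-- Let `l` be a special type C partition of `2n`.  Take the padded column list of `l`
(padded with zeros to odd length); repeatedly delete two equal adjacent entries at
positions `2t+1` and `2t` until no such pair remains; then repeatedly delete two equal
adjacent entries of odd value at positions `2t` and `2t-1` until no such pair remains.
Then every entry of the resulting list is even. -/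
theorem typeC_reducedColumnString_even (n : ℕ) (l : List ℕ)
    (hpart : IsPartitionOf (2 * n) l)
    (hC : ∀ e ∈ l, Odd e → Even (l.count e))
    (hspecial : ∀ e ∈ transposeList l, Odd e → Even ((transposeList l).count e)) :
    ∀ M₁ M₂ : List ℕ,
      Relation.ReflTransGen delStepE (padToOdd (transposeList l)) M₁ →
      (∀ M', ¬ delStepE M₁ M') →
      Relation.ReflTransGen delStepOOddVal M₁ M₂ →
      (∀ M', ¬ delStepOOddVal M₂ M') →
      ∀ x ∈ M₂, Even x := by
  intro M₁ M₂ h1 hstop1 h2 hstop2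
  have hG1 : GoodInv M₁ := goodInv_rtE h1 (goodInv_init l hspecial)
  have hN1 : NoE M₁ := by
    intro a p q hpq
    rcases Nat.even_or_odd q.length with he | ho
    · exact absurd ⟨a, p, q, he, hpq, rfl⟩ (hstop1 (p ++ q))
    · exact ho
  obtain ⟨hG2, hN2⟩ := inv_rtO h2 hG1 hN1
  intro x hx
  by_contra hodd
  rw [Nat.not_even_iff_odd] at hodd
  have h1' : 0 < M₂.count x := List.count_pos_iff.mpr hx
  have h2' : Even (M₂.count x) := hG2.2 x hodd
  have h3 : 2 ≤ M₂.count x := by rw [Nat.even_iff] at h2'; omega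
  obtain ⟨l₁, l₂, rfl⟩ := exists_adj_pair M₂ hG2.1 x h3
  have hodd2 := hN2 x l₁ l₂ rfl
  exact hstop2 (l₁ ++ l₂) ⟨x, l₁, l₂, hodd, hodd2, rfl, rfl⟩
end
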